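/- arXiv:1608.00342 — 5 statements merged into one kernel-verified Lean document; each statement's English description precedes it below -/
import Mathlib

section
/- The polynomials H_k for k ∈ ℤ generate Λ_m^± = ℤ[x_1^{±1},...,x_m^{±1}]^{S_m} as a ring. -/
open Finset

noncomputable section

variable {F : Type*} [Field F]

/-- Vandermonde product ∏_{i<j} (x i - x j). -/
def Vand {m : ℕ} (x : Fin m → F) : F :=
  ∏ p ∈ Finset.univ.filter fun p : Fin m × Fin m => p.1 < p.2, (x p.1 - x p.2)

/-- Alternation over S_m of the Laurent monomial with exponents `a`. -/
def altSum {m : ℕ} (x : Fin m → F) (a : Fin m → ℤ) : F :=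
  ∑ σ : Equiv.Perm (Fin m), ((Equiv.Perm.sign σ : ℤ) : F) * ∏ i, x (σ i) ^ a i

/-- The Euler character E_λ, defined by E_λ · Δ = {∏ x_i^{λ_i+m-i}}. -/
def Eul {m : ℕ} (x : Fin m → F) (l : Fin m → ℤ) : F :=
  altSum x (fun i => l i + ((m : ℤ) - 1 - (i : ℤ))) / Vand x

/-- H_k = E_{(k,0,…,0)}. -/
def Hch {m : ℕ} (x : Fin m → F) (k : ℤ) : F :=
  Eul x fun i => if (i : ℕ) = 0 then k else 0

/-- The field of rational functions in m variables over ℚ. -/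
abbrev KK (m : ℕ) := FractionRing (MvPolynomial (Fin m) ℚ)

/-- The canonical variables x_1, …, x_m inside the fraction field. -/
def Xv (m : ℕ) (i : Fin m) : KK m :=
  algebraMap (MvPolynomial (Fin m) ℚ) (KK m) (MvPolynomial.X i)

/-- The field automorphism of the rational function field induced by permuting the variables. -/
def permMap (m : ℕ) (σ : Equiv.Perm (Fin m)) : KK m ≃+* KK m :=
  IsFractionRing.ringEquivOfRingEquiv (MvPolynomial.renameEquiv ℚ σ).toRingEquiv

/-- The ring ℤ[x_1^{±1},…,x_m^{±1}] of Laurent polynomials over ℤ, as a subring of the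
rational function field. -/
def LaurentSR (m : ℕ) : Subring (KK m) :=
  Subring.closure (Set.range (Xv m) ∪ Set.range fun i => (Xv m i)⁻¹)

/-- The ring Λ_m^± = ℤ[x_1^{±1},…,x_m^{±1}]^{S_m} of symmetric Laurent polynomials. -/
def SymLaurentSR (m : ℕ) : Subring (KK m) where
  carrier := {f | f ∈ LaurentSR m ∧ ∀ σ : Equiv.Perm (Fin m), permMap m σ f = f}
  one_mem' := ⟨one_mem _, fun σ => map_one _⟩
  mul_mem' := fun ha hb => ⟨mul_mem ha.1 hb.1, fun σ => by rw [map_mul, ha.2, hb.2]⟩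
  add_mem' := fun ha hb => ⟨add_mem ha.1 hb.1, fun σ => by rw [map_add, ha.2, hb.2]⟩
  zero_mem' := ⟨zero_mem _, fun σ => map_zero _⟩
  neg_mem' := fun ha => ⟨neg_mem ha.1, fun σ => by rw [map_neg, ha.2]⟩

-- helper: double product over pairs
lemma prod_pairs {m : ℕ} (g : Fin m → Fin m → F) :
    ∏ p ∈ Finset.univ.filter (fun p : Fin m × Fin m => p.1 < p.2), g p.1 p.2
      = ∏ i : Fin m, ∏ j ∈ Ioi i, g i j := by
  rw [Finset.prod_sigma']
  refine Finset.prod_nbij' (fun p => ⟨p.1, p.2⟩) (fun p => (p.1, p.2)) ?_ ?_ ?_ ?_ ?_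
  · intro a ha
    simp only [Finset.mem_filter] at ha
    simp [Finset.mem_sigma, Finset.mem_Ioi, ha.2]
  · intro a ha
    simp only [Finset.mem_sigma, Finset.mem_Ioi] at ha
    simp [Finset.mem_filter, ha.2]
  · intro a _; rfl
  · intro a _; rfl
  · intro a _; rfl

lemma altSum_swap_eq_zero {m : ℕ} [CharZero F] (x : Fin m → F) (a : Fin m → ℤ)
    (i j : Fin m) (hij : i ≠ j) (haa : a i = a j) : altSum x a = 0 := by
  set f : Equiv.Perm (Fin m) → F :=
    fun σ => ((Equiv.Perm.sign σ : ℤ) : F) * ∏ l, x (σ l) ^ a l with hf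
  have haswap : ∀ l, a (Equiv.swap i j l) = a l := by
    intro l
    rcases eq_or_ne l i with rfl | hli
    · rw [Equiv.swap_apply_left]; exact haa.symm
    rcases eq_or_ne l j with rfl | hlj
    · rw [Equiv.swap_apply_right]; exact haa
    · rw [Equiv.swap_apply_of_ne_of_ne hli hlj]
  have key : altSum x a = - altSum x a := by
    calc altSum x a = ∑ σ : Equiv.Perm (Fin m), f ((Equiv.mulRight (Equiv.swap i j)) σ) :=
          (Equiv.sum_comp (Equiv.mulRight (Equiv.swap i j)) f).symm
      _ = ∑ σ : Equiv.Perm (Fin m), -(f σ) := by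
          refine Finset.sum_congr rfl fun σ _ => ?_
          have hsign : Equiv.Perm.sign ((Equiv.mulRight (Equiv.swap i j)) σ)
              = - Equiv.Perm.sign σ := by
            simp [Equiv.Perm.sign_swap hij]
          have hprod : ∏ l, x (((Equiv.mulRight (Equiv.swap i j)) σ) l) ^ a l
              = ∏ l, x (σ l) ^ a l := by
            calc ∏ l, x (((Equiv.mulRight (Equiv.swap i j)) σ) l) ^ a l
                = ∏ l, (fun t => x (σ t) ^ a (Equiv.swap i j t)) (Equiv.swap i j l) := by
                  refine Finset.prod_congr rfl fun l _ => ?_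
                  simp only [Equiv.coe_mulRight, Equiv.Perm.mul_apply, Equiv.swap_apply_self]
              _ = ∏ l, x (σ l) ^ a (Equiv.swap i j l) :=
                  Equiv.prod_comp (Equiv.swap i j) (fun t => x (σ t) ^ a (Equiv.swap i j t))
              _ = ∏ l, x (σ l) ^ a l := Finset.prod_congr rfl fun l _ => by rw [haswap l]
          simp only [hf, hsign, hprod]
          push_cast
          ring
      _ = - altSum x a := by rw [Finset.sum_neg_distrib]; rfl
  have h2 : (2 : F) * altSum x a = 0 := by linear_combination key
  exact (mul_eq_zero.mp h2).resolve_left two_ne_zero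


lemma altSum_staircase {m : ℕ} (x : Fin m → F) :
    altSum x (fun i => (m : ℤ) - 1 - (i : ℤ)) = Vand x := by
  classical
  have hexp : ∀ i : Fin m, ((m : ℤ) - 1 - (i : ℤ)) = ((m - 1 - (i : ℕ) : ℕ) : ℤ) := by
    intro i; have := i.isLt; omega
  have hrev : ∀ i : Fin m, m - 1 - ((Fin.rev i : Fin m) : ℕ) = (i : ℕ) := by
    intro i; have := i.isLt; rw [Fin.val_rev]; omega
  set y : Fin m → F := fun i => x (Fin.rev i) with hy
  have hdet : Matrix.det (Matrix.vandermonde y) = Vand x := by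
    rw [Matrix.det_vandermonde, Vand, prod_pairs (fun i j => x i - x j)]
    -- ∏ i, ∏ j in Ioi i, (y j - y i) = ∏ i, ∏ j in Ioi i, (x i - x j)
    rw [← prod_pairs (fun i j => y j - y i), ← prod_pairs (fun i j => x i - x j)]
    refine Finset.prod_nbij' (fun p => (Fin.rev p.2, Fin.rev p.1))
      (fun p => (Fin.rev p.2, Fin.rev p.1)) ?_ ?_ ?_ ?_ ?_
    · intro p hp
      simp only [Finset.mem_filter, Finset.mem_univ, true_and] at hp ⊢
      exact Fin.rev_lt_rev.mpr hp
    · intro p hp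
      simp only [Finset.mem_filter, Finset.mem_univ, true_and] at hp ⊢
      exact Fin.rev_lt_rev.mpr hp
    · intro p _; simp [Fin.rev_rev]
    · intro p _; simp [Fin.rev_rev]
    · intro p _; simp [hy, Fin.rev_rev]
  rw [← hdet, Matrix.det_apply]
  unfold altSum
  have conj : ∀ σ : Equiv.Perm (Fin m),
      ((Equiv.Perm.sign σ : ℤ) : F) * ∏ i, x (σ i) ^ ((m : ℤ) - 1 - (i : ℤ))
      = (fun τ : Equiv.Perm (Fin m) =>
          ((Equiv.Perm.sign τ : ℤ) : F) * ∏ i, y (τ i) ^ (i : ℕ))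
        (Fin.revPerm * σ * Fin.revPerm) := by
    intro σ
    have hsign : Equiv.Perm.sign (Fin.revPerm * σ * Fin.revPerm : Equiv.Perm (Fin m))
        = Equiv.Perm.sign σ := by
      rw [map_mul, map_mul]
      have h2 : Equiv.Perm.sign (Fin.revPerm : Equiv.Perm (Fin m))
          * Equiv.Perm.sign (Fin.revPerm : Equiv.Perm (Fin m)) = 1 := Int.units_mul_self _
      rw [mul_comm _ (Equiv.Perm.sign (Fin.revPerm : Equiv.Perm (Fin m))), ← mul_assoc, h2,
        one_mul]
    have hprod : ∏ i, x (σ i) ^ ((m : ℤ) - 1 - (i : ℤ))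
        = ∏ i, y ((Fin.revPerm * σ * Fin.revPerm : Equiv.Perm (Fin m)) i) ^ (i : ℕ) := by
      calc ∏ i, x (σ i) ^ ((m : ℤ) - 1 - (i : ℤ))
          = ∏ i, x (σ i) ^ ((m - 1 - (i : ℕ) : ℕ)) := by
            refine Finset.prod_congr rfl fun i _ => ?_
            rw [hexp i, zpow_natCast]
        _ = ∏ i, (fun t => x (σ t) ^ (m - 1 - (t : ℕ))) (Fin.revPerm i) :=
            (Equiv.prod_comp Fin.revPerm (fun t => x (σ t) ^ (m - 1 - (t : ℕ)))).symm
        _ = ∏ i, y ((Fin.revPerm * σ * Fin.revPerm : Equiv.Perm (Fin m)) i) ^ (i : ℕ) := by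
            refine Finset.prod_congr rfl fun i _ => ?_
            simp only [Fin.revPerm_apply, Equiv.Perm.mul_apply, hy, Fin.rev_rev]
            rw [hrev i]
    dsimp only
    rw [hsign, hprod]
  rw [Finset.sum_congr rfl (fun σ _ => conj σ)]
  have hbij : Function.Bijective
      (fun σ : Equiv.Perm (Fin m) => Fin.revPerm * σ * Fin.revPerm) := by
    have hinv : Function.Involutive
        (fun σ : Equiv.Perm (Fin m) => Fin.revPerm * σ * Fin.revPerm) := by
      intro σ
      ext t
      simp [Equiv.Perm.mul_apply, Fin.rev_rev]
    exact hinv.bijective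
  refine (Function.Bijective.sum_comp hbij (fun τ : Equiv.Perm (Fin m) =>
    ((Equiv.Perm.sign τ : ℤ) : F) * ∏ i, y (τ i) ^ (i : ℕ))).trans ?_
  refine Finset.sum_congr rfl fun τ _ => ?_
  simp [Matrix.vandermonde_apply, Units.smul_def, zsmul_eq_mul]



namespace EulerGen

lemma algMap_inj (m : ℕ) :
    Function.Injective (algebraMap (MvPolynomial (Fin m) ℚ) (KK m)) :=
  IsFractionRing.injective _ _

instance KKcharZero (m : ℕ) : CharZero (KK m) :=
  charZero_of_injective_algebraMap (algMap_inj m)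

lemma Xv_inj (m : ℕ) : Function.Injective (Xv m) := fun i j h => by
  have := algMap_inj m h
  exact MvPolynomial.X_injective this

lemma Xv_ne (m : ℕ) (i : Fin m) : Xv m i ≠ 0 := by
  intro h
  have : (MvPolynomial.X i : MvPolynomial (Fin m) ℚ) = 0 := by
    apply algMap_inj m
    rw [map_zero]; exact h
  exact MvPolynomial.X_ne_zero i this

lemma Vand_ne (m : ℕ) : Vand (Xv m) ≠ 0 := by
  unfold Vand
  rw [Finset.prod_ne_zero_iff]
  intro p hp
  simp only [Finset.mem_filter] at hp
  exact sub_ne_zero_of_ne fun h => absurd (Xv_inj m h) (ne_of_lt hp.2)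

/-- elementary symmetric functions of the variables (as elements of `KK m`). -/
def E (m : ℕ) (j : ℕ) : KK m := (Finset.univ.val.map (Xv m)).esymm j

lemma E_zero (m : ℕ) : E m 0 = 1 := by
  rw [E, Multiset.esymm, Multiset.powersetCard_zero_left]
  simp

lemma prod_sub_eq (m : ℕ) (t : KK m) :
    ∏ i, (t - Xv m i) = ∑ j ∈ Finset.range (m + 1), (-1 : KK m) ^ j * E m j * t ^ (m - j) := by
  classical
  have hcard : Multiset.card (Finset.univ.val.map (Xv m)) = m := by
    simp
  have h := Multiset.prod_X_sub_X_eq_sum_esymm (Finset.univ.val.map (Xv m))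
  have h2 := congrArg (Polynomial.eval t) h
  rw [Polynomial.eval_multiset_prod, Multiset.map_map, hcard] at h2
  rw [Polynomial.eval_finset_sum] at h2
  have hl : Multiset.prod (Multiset.map
        ((fun p => Polynomial.eval t p) ∘ fun r => Polynomial.X - Polynomial.C r)
        (Finset.univ.val.map (Xv m)))
      = ∏ i, (t - Xv m i) := by
    rw [Finset.prod_eq_multiset_prod, Multiset.map_map]
    congr 1
    apply Multiset.map_congr rfl
    intro i _
    simp
  rw [hl] at h2
  rw [h2]
  refine Finset.sum_congr rfl fun j hj => ?_
  simp [E, mul_assoc]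

lemma master_alt (m : ℕ) (hm : 0 < m) (k : ℤ) :
    ∑ j ∈ Finset.range (m + 1), (-1 : KK m) ^ j * E m j *
      altSum (Xv m) (fun i => (if (i : ℕ) = 0 then k - (j : ℤ) else 0) + ((m : ℤ) - 1 - (i : ℤ)))
      = 0 := by
  classical
  set x := Xv m with hx
  set i0 : Fin m := ⟨0, hm⟩ with hi0
  unfold altSum
  simp_rw [Finset.mul_sum]
  rw [Finset.sum_comm]
  refine Finset.sum_eq_zero fun σ _ => ?_
  have hz : x (σ i0) ≠ 0 := Xv_ne m _
  set sgn : KK m := ((Equiv.Perm.sign σ : ℤ) : KK m) with hsgn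
  set R : KK m := ∏ i ∈ Finset.univ.erase i0, x (σ i) ^ ((m : ℤ) - 1 - (i : ℤ)) with hR
  have hsplit : ∀ j ∈ Finset.range (m + 1),
      (∏ i, x (σ i) ^ ((if (i : ℕ) = 0 then k - (j : ℤ) else 0) + ((m : ℤ) - 1 - (i : ℤ))))
      = (x (σ i0) ^ (k - 1) * x (σ i0) ^ ((m - j : ℕ))) * R := by
    intro j hj
    have hjm : j ≤ m := by simpa using Nat.lt_succ_iff.mp (Finset.mem_range.mp hj)
    rw [← Finset.mul_prod_erase Finset.univ _ (Finset.mem_univ i0)]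
    have h0 : ((i0 : Fin m) : ℕ) = 0 := rfl
    have hexp : (if ((i0 : Fin m) : ℕ) = 0 then k - (j : ℤ) else 0) + ((m : ℤ) - 1 - (i0 : ℤ))
        = (k - 1) + ((m - j : ℕ) : ℤ) := by
      rw [h0, if_pos rfl]
      push_cast [h0]
      omega
    rw [hexp, zpow_add₀ hz, zpow_natCast]
    congr 1
    refine Finset.prod_congr rfl fun i hi => ?_
    have : (i : ℕ) ≠ 0 := by
      intro h
      exact (Finset.mem_erase.mp hi).1 (Fin.ext h)
    rw [if_neg this, zero_add]
  calc ∑ j ∈ Finset.range (m + 1), (-1 : KK m) ^ j * E m j *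
        (sgn * ∏ i, x (σ i) ^ ((if (i : ℕ) = 0 then k - (j : ℤ) else 0) + ((m : ℤ) - 1 - (i : ℤ))))
      = ∑ j ∈ Finset.range (m + 1), (sgn * R) *
          (x (σ i0) ^ (k - 1) * ((-1 : KK m) ^ j * E m j * x (σ i0) ^ ((m - j : ℕ)))) := by
        refine Finset.sum_congr rfl fun j hj => ?_
        rw [hsplit j hj]
        ring
    _ = (sgn * R) * (x (σ i0) ^ (k - 1) *
          ∑ j ∈ Finset.range (m + 1), (-1 : KK m) ^ j * E m j * x (σ i0) ^ ((m - j : ℕ))) := by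
        rw [← Finset.mul_sum, ← Finset.mul_sum]
    _ = 0 := by
        rw [← prod_sub_eq m (x (σ i0))]
        have hzero : ∏ i, (x (σ i0) - Xv m i) = 0 :=
          Finset.prod_eq_zero (Finset.mem_univ (σ i0)) (by rw [hx]; exact sub_self _)
        rw [hzero, mul_zero, mul_zero]

lemma master (m : ℕ) (hm : 0 < m) (k : ℤ) :
    ∑ j ∈ Finset.range (m + 1), (-1 : KK m) ^ j * E m j * Hch (Xv m) (k - (j : ℤ)) = 0 := by
  have h := master_alt m hm k
  unfold Hch Eul
  simp_rw [mul_div_assoc']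
  rw [← Finset.sum_div, h, zero_div]

lemma Hch_zero (m : ℕ) : Hch (Xv m) 0 = 1 := by
  unfold Hch Eul
  have : (fun i : Fin m => (if (i : ℕ) = 0 then (0 : ℤ) else 0) + ((m : ℤ) - 1 - (i : ℤ)))
      = fun i : Fin m => (m : ℤ) - 1 - (i : ℤ) := by
    funext i; simp
  rw [this, altSum_staircase, div_self (Vand_ne m)]

lemma Hch_neg (m : ℕ) (k : ℤ) (h1 : -(m : ℤ) < k) (h2 : k < 0) : Hch (Xv m) k = 0 := by
  have hm : 0 < m := by omega
  have hr1 : (1 : ℤ) ≤ -k := by omega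
  have hrm : -k < m := by omega
  set r : ℕ := (-k).toNat with hrdef
  have hrk : (r : ℤ) = -k := Int.toNat_of_nonneg (by omega)
  have hrm' : r < m := by omega
  have hr1' : 1 ≤ r := by omega
  unfold Hch Eul
  rw [altSum_swap_eq_zero (Xv m) _ ⟨0, hm⟩ ⟨r, hrm'⟩ ?_ ?_, zero_div]
  · exact Fin.ne_of_val_ne (show (0 : ℕ) ≠ r by omega)
  · show (if ((⟨0, hm⟩ : Fin m) : ℕ) = 0 then k else 0) + ((m : ℤ) - 1 - ((⟨0, hm⟩ : Fin m) : ℤ))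
      = (if ((⟨r, hrm'⟩ : Fin m) : ℕ) = 0 then k else 0) + ((m : ℤ) - 1 - ((⟨r, hrm'⟩ : Fin m) : ℤ))
    have e1 : (if ((⟨0, hm⟩ : Fin m) : ℕ) = 0 then k else 0) = k := if_pos rfl
    have e2 : (if ((⟨r, hrm'⟩ : Fin m) : ℕ) = 0 then k else 0) = 0 :=
      if_neg (by simp only [Fin.val_mk]; omega)
    rw [e1, e2]
    have e3 : ((⟨0, hm⟩ : Fin m) : ℤ) = 0 := rfl
    have e4 : ((⟨r, hrm'⟩ : Fin m) : ℤ) = (r : ℤ) := rfl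
    rw [e3, e4]
    omega

/-- The subring generated by the `H k`. -/
def Cgen (m : ℕ) : Subring (KK m) :=
  Subring.closure (Set.range fun k : ℤ => Hch (Xv m) k)

/-- The subring generated by `e_1, …, e_m` and `e_m⁻¹`. -/
def Dgen (m : ℕ) : Subring (KK m) :=
  Subring.closure ((Set.range fun j : Fin (m + 1) => E m (j : ℕ)) ∪ {(E m m)⁻¹})

lemma Hch_mem_C (m : ℕ) (k : ℤ) : Hch (Xv m) k ∈ Cgen m :=
  Subring.subset_closure ⟨k, rfl⟩

lemma E_mem_D (m : ℕ) (j : ℕ) (hj : j ≤ m) : E m j ∈ Dgen m :=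
  Subring.subset_closure (Or.inl ⟨⟨j, by omega⟩, rfl⟩)

lemma Einv_mem_D (m : ℕ) : (E m m)⁻¹ ∈ Dgen m :=
  Subring.subset_closure (Or.inr rfl)

lemma Em_mul (m : ℕ) (hm : 0 < m) :
    E m m * ((-1 : KK m) ^ (m + 1) * Hch (Xv m) (-(m : ℤ))) = 1 := by
  have h := master m hm 0
  rw [Finset.sum_range_succ] at h
  have hsum : ∑ j ∈ Finset.range m, (-1 : KK m) ^ j * E m j * Hch (Xv m) (0 - (j : ℤ)) = 1 := by
    rw [Finset.sum_eq_single_of_mem 0 (Finset.mem_range.mpr hm)]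
    · simp [E_zero, Hch_zero]
    · intro j hj hj0
      have hjm : j < m := Finset.mem_range.mp hj
      rw [Hch_neg m _ (by omega) (by omega), mul_zero]
  rw [hsum] at h
  rw [pow_succ]
  have h0 : (0 : ℤ) - (m : ℤ) = -(m : ℤ) := by omega
  rw [h0] at h
  linear_combination -h

lemma Em_ne (m : ℕ) (hm : 0 < m) : E m m ≠ 0 :=
  left_ne_zero_of_mul_eq_one (Em_mul m hm)

lemma Einv_eq (m : ℕ) (hm : 0 < m) :
    (E m m)⁻¹ = (-1 : KK m) ^ (m + 1) * Hch (Xv m) (-(m : ℤ)) :=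
  inv_eq_of_mul_eq_one_right (Em_mul m hm)

lemma E_mem_C (m : ℕ) (hm : 0 < m) : ∀ n, n ≤ m → E m n ∈ Cgen m := by
  intro n
  induction n using Nat.strong_induction_on with
  | _ n IH =>
    intro hnm
    rcases Nat.eq_zero_or_pos n with rfl | hn
    · rw [E_zero]; exact one_mem _
    have h := master m hm n
    have hsub : ∑ j ∈ Finset.range (n + 1), (-1 : KK m) ^ j * E m j * Hch (Xv m) ((n : ℤ) - (j : ℤ))
        = 0 := by
      rw [← h]
      apply Finset.sum_subset (Finset.range_subset_range.mpr (Nat.succ_le_succ hnm))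
      intro j hj hj'
      have h1 : j ≤ m := Nat.lt_succ_iff.mp (Finset.mem_range.mp hj)
      have h2 : n < j := by
        by_contra hc
        exact hj' (Finset.mem_range.mpr (by omega))
      rw [Hch_neg m _ (by omega) (by omega), mul_zero]
    rw [Finset.sum_range_succ] at hsub
    have hEn : E m n = (-1 : KK m) ^ n *
        (- ∑ j ∈ Finset.range n, (-1 : KK m) ^ j * E m j * Hch (Xv m) ((n : ℤ) - (j : ℤ))) := by
      have hHn : Hch (Xv m) ((n : ℤ) - (n : ℤ)) = 1 := by rw [sub_self]; exact Hch_zero m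
      rw [hHn, mul_one] at hsub
      have hu : (-1 : KK m) ^ n * (-1 : KK m) ^ n = 1 := by rw [← mul_pow]; simp
      generalize (-1 : KK m) ^ n = u at hsub hu ⊢
      linear_combination u * hsub - (E m n) * hu
    rw [hEn]
    refine mul_mem (by apply pow_mem; exact neg_mem (one_mem _)) (neg_mem (sum_mem fun j hj => ?_))
    have hjn : j < n := Finset.mem_range.mp hj
    refine mul_mem (mul_mem (by apply pow_mem; exact neg_mem (one_mem _)) (IH j hjn (by omega))) ?_
    exact Hch_mem_C m _

lemma Hch_up_mem_D (m : ℕ) (hm : 0 < m) : ∀ n : ℕ, Hch (Xv m) (n : ℤ) ∈ Dgen m := by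
  intro n
  induction n using Nat.strong_induction_on with
  | _ n IH =>
    rcases Nat.eq_zero_or_pos n with rfl | hn
    · rw [show ((0 : ℕ) : ℤ) = 0 by norm_num, Hch_zero]; exact one_mem _
    have h := master m hm n
    rw [Finset.sum_range_succ'] at h
    simp only [pow_zero, one_mul, Nat.cast_zero, sub_zero, E_zero] at h
    have hEq : Hch (Xv m) (n : ℤ) = - ∑ j ∈ Finset.range m,
        (-1 : KK m) ^ (j + 1) * E m (j + 1) * Hch (Xv m) ((n : ℤ) - ((j : ℤ) + 1)) := by
      have : ∀ j ∈ Finset.range m, (-1 : KK m) ^ (j + 1) * E m (j + 1)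
          * Hch (Xv m) ((n : ℤ) - (((j + 1 : ℕ)) : ℤ))
          = (-1 : KK m) ^ (j + 1) * E m (j + 1) * Hch (Xv m) ((n : ℤ) - ((j : ℤ) + 1)) := by
        intro j _; push_cast; ring_nf
      rw [Finset.sum_congr rfl this] at h
      linear_combination h
    rw [hEq]
    refine neg_mem (sum_mem fun j hj => ?_)
    have hjm : j < m := Finset.mem_range.mp hj
    refine mul_mem (mul_mem (by apply pow_mem; exact neg_mem (one_mem _))
      (E_mem_D m (j + 1) (by omega))) ?_
    rcases le_or_gt ((j : ℤ) + 1) (n : ℤ) with hle | hlt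
    · have hcast : ((n - (j + 1) : ℕ) : ℤ) = (n : ℤ) - ((j : ℤ) + 1) := by omega
      rw [← hcast]
      exact IH (n - (j + 1)) (by omega)
    · rw [Hch_neg m _ (by omega) (by omega)]
      exact zero_mem _

lemma Hch_down_mem_D (m : ℕ) (hm : 0 < m) : ∀ n : ℕ, Hch (Xv m) (-(n : ℤ)) ∈ Dgen m := by
  intro n
  induction n using Nat.strong_induction_on with
  | _ n IH =>
    rcases lt_or_ge n m with hnm | hnm
    · rcases Nat.eq_zero_or_pos n with rfl | hn
      · rw [show -((0 : ℕ) : ℤ) = 0 by norm_num, Hch_zero]; exact one_mem _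
      · rw [Hch_neg m _ (by omega) (by omega)]; exact zero_mem _
    have h := master m hm ((m : ℤ) - (n : ℤ))
    rw [Finset.sum_range_succ] at h
    have hmn : (m : ℤ) - (n : ℤ) - (m : ℤ) = -(n : ℤ) := by omega
    rw [hmn] at h
    set S : KK m := ∑ j ∈ Finset.range m,
      (-1 : KK m) ^ j * E m j * Hch (Xv m) ((m : ℤ) - (n : ℤ) - (j : ℤ)) with hS
    have hu : (-1 : KK m) ^ m * (-1 : KK m) ^ m = 1 := by rw [← mul_pow]; simp
    have h2 : E m m * Hch (Xv m) (-(n : ℤ)) = (-1 : KK m) ^ m * (- S) := by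
      generalize (-1 : KK m) ^ m = u at h hu ⊢
      linear_combination u * h - (E m m * Hch (Xv m) (-(n : ℤ))) * hu
    have key : Hch (Xv m) (-(n : ℤ)) = (E m m)⁻¹ * ((-1 : KK m) ^ m * (- S)) := by
      rw [← h2, inv_mul_cancel_left₀ (Em_ne m hm)]
    rw [key]
    refine mul_mem (Einv_mem_D m) (mul_mem (by apply pow_mem; exact neg_mem (one_mem _))
      (neg_mem (sum_mem fun j hj => ?_)))
    have hjm : j < m := Finset.mem_range.mp hj
    refine mul_mem (mul_mem (by apply pow_mem; exact neg_mem (one_mem _))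
      (E_mem_D m j (by omega))) ?_
    have hcast : (m : ℤ) - (n : ℤ) - (j : ℤ) = -(((n - m + j : ℕ)) : ℤ) := by omega
    rw [hcast]
    exact IH (n - m + j) (by omega)

lemma Hch_mem_D (m : ℕ) (hm : 0 < m) (k : ℤ) : Hch (Xv m) k ∈ Dgen m := by
  obtain ⟨n, rfl | rfl⟩ := Int.eq_nat_or_neg k
  · exact Hch_up_mem_D m hm n
  · exact Hch_down_mem_D m hm n

lemma Cgen_eq_Dgen (m : ℕ) (hm : 0 < m) : Cgen m = Dgen m := by
  apply le_antisymm
  · rw [Cgen, Subring.closure_le]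
    rintro _ ⟨k, rfl⟩
    exact Hch_mem_D m hm k
  · rw [Dgen, Subring.closure_le]
    rintro f hf
    rcases hf with ⟨j, rfl⟩ | hf
    · exact E_mem_C m hm (j : ℕ) (by omega)
    · rcases hf with rfl
      rw [Einv_eq m hm]
      exact mul_mem (by apply pow_mem; exact neg_mem (one_mem _)) (Hch_mem_C m _)

/-- The canonical map `ℤ[x_1,…,x_m] → KK m`. -/
def phi (m : ℕ) : MvPolynomial (Fin m) ℤ →+* KK m :=
  ((algebraMap (MvPolynomial (Fin m) ℚ) (KK m)) : MvPolynomial (Fin m) ℚ →+* KK m).comp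
    (MvPolynomial.map (Int.castRingHom ℚ))

lemma phi_X (m : ℕ) (i : Fin m) : phi m (MvPolynomial.X i) = Xv m i := by
  simp [phi, Xv, MvPolynomial.map_X]

lemma phi_inj (m : ℕ) : Function.Injective (phi m) :=
  (algMap_inj m).comp (MvPolynomial.map_injective _ Int.cast_injective)

lemma permMap_alg (m : ℕ) (σ : Equiv.Perm (Fin m)) (p : MvPolynomial (Fin m) ℚ) :
    permMap m σ (algebraMap (MvPolynomial (Fin m) ℚ) (KK m) p)
      = algebraMap (MvPolynomial (Fin m) ℚ) (KK m) (MvPolynomial.rename σ p) := by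
  unfold permMap IsFractionRing.ringEquivOfRingEquiv
  exact IsLocalization.ringEquivOfRingEquiv_eq _ _

lemma permMap_Xv (m : ℕ) (σ : Equiv.Perm (Fin m)) (i : Fin m) :
    permMap m σ (Xv m i) = Xv m (σ i) := by
  rw [Xv, permMap_alg]
  simp [MvPolynomial.rename_X, Xv]

lemma permMap_phi (m : ℕ) (σ : Equiv.Perm (Fin m)) (p : MvPolynomial (Fin m) ℤ) :
    permMap m σ (phi m p) = phi m (MvPolynomial.rename σ p) := by
  simp only [phi, RingHom.comp_apply]
  rw [permMap_alg, MvPolynomial.map_rename]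

lemma phi_eq_aeval (m : ℕ) (p : MvPolynomial (Fin m) ℤ) :
    phi m p = MvPolynomial.aeval (Xv m) p := by
  induction p using MvPolynomial.induction_on with
  | C a =>
    rw [MvPolynomial.aeval_C]
    have h1 : phi m (MvPolynomial.C a) = ((phi m).comp (MvPolynomial.C)) a := rfl
    rw [h1, eq_intCast ((phi m).comp (MvPolynomial.C)) a]
    rw [show (algebraMap ℤ (KK m)) a = ((a : ℤ) : KK m) from eq_intCast (algebraMap ℤ (KK m)) a]
  | add p q hp hq => rw [map_add, map_add, hp, hq]
  | mul_X p i hp => rw [map_mul, map_mul, hp, phi_X, MvPolynomial.aeval_X]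

lemma phi_esymm (m : ℕ) (j : ℕ) : phi m (MvPolynomial.esymm (Fin m) ℤ j) = E m j := by
  rw [phi_eq_aeval, MvPolynomial.aeval_esymm_eq_multiset_esymm]
  rfl

/-- The product of all variables. -/
def Pv (m : ℕ) : KK m := ∏ i, Xv m i

lemma Pv_ne (m : ℕ) : Pv m ≠ 0 := by
  rw [Pv, Finset.prod_ne_zero_iff]
  exact fun i _ => Xv_ne m i

lemma E_top (m : ℕ) : E m m = Pv m := by
  rw [← phi_esymm, MvPolynomial.esymm]
  have hps : Finset.powersetCard m (Finset.univ : Finset (Fin m)) = {Finset.univ} := by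
    have h := Finset.powersetCard_self (Finset.univ : Finset (Fin m))
    simpa using h
  rw [hps, Finset.sum_singleton, map_prod, Pv]
  exact Finset.prod_congr rfl fun i _ => phi_X m i

lemma ringHom_mem {n : ℕ} {A : Type*} [CommRing A] (χ : MvPolynomial (Fin n) ℤ →+* A)
    (p : MvPolynomial (Fin n) ℤ) :
    χ p ∈ Subring.closure (Set.range fun i => χ (MvPolynomial.X i)) := by
  induction p using MvPolynomial.induction_on with
  | C a =>
    rw [show χ (MvPolynomial.C a) = ((χ.comp (MvPolynomial.C)) a) from rfl,
      eq_intCast (χ.comp (MvPolynomial.C)) a]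
    exact intCast_mem _ a
  | add p q hp hq => rw [map_add]; exact add_mem hp hq
  | mul_X p i hp => rw [map_mul]; exact mul_mem hp (Subring.subset_closure ⟨i, rfl⟩)

lemma phi_mem_closure (m : ℕ) (p : MvPolynomial (Fin m) ℤ) :
    phi m p ∈ Subring.closure (Set.range (Xv m)) := by
  have h := ringHom_mem (phi m) p
  have he : (fun i => phi m (MvPolynomial.X i)) = Xv m := funext (phi_X m)
  rwa [he] at h

/-- elements whose product with a high power of `Pv` is polynomial. -/
def clearSR (m : ℕ) : Subring (KK m) where
  carrier := {f : KK m | ∃ N : ℕ, (Pv m) ^ N * f ∈ (phi m).range}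
  zero_mem' := ⟨0, ⟨0, by simp⟩⟩
  one_mem' := ⟨0, ⟨1, by simp⟩⟩
  add_mem' := by
    rintro a b ⟨N1, p, hp⟩ ⟨N2, q, hq⟩
    refine ⟨N1 + N2, (∏ i, MvPolynomial.X i) ^ N2 * p + (∏ i, MvPolynomial.X i) ^ N1 * q, ?_⟩
    have hP : phi m (∏ i, MvPolynomial.X i) = Pv m := by
      rw [map_prod, Pv]; exact Finset.prod_congr rfl fun i _ => phi_X m i
    rw [map_add, map_mul, map_mul, map_pow, map_pow, hP, hp, hq]
    ring
  mul_mem' := by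
    rintro a b ⟨N1, p, hp⟩ ⟨N2, q, hq⟩
    refine ⟨N1 + N2, p * q, ?_⟩
    rw [map_mul, hp, hq]
    ring
  neg_mem' := by
    rintro a ⟨N, p, hp⟩
    exact ⟨N, -p, by rw [map_neg, hp]; ring⟩

lemma exists_clear (m : ℕ) {f : KK m} (hf : f ∈ LaurentSR m) :
    ∃ N : ℕ, (Pv m) ^ N * f ∈ (phi m).range := by
  have hle : LaurentSR m ≤ clearSR m := by
    rw [LaurentSR, Subring.closure_le]
    rintro g (⟨i, rfl⟩ | ⟨i, rfl⟩)
    · exact ⟨0, MvPolynomial.X i, by rw [phi_X]; simp⟩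
    · refine ⟨1, ∏ j ∈ Finset.univ.erase i, MvPolynomial.X j, ?_⟩
      rw [map_prod, pow_one, Pv, ← Finset.mul_prod_erase Finset.univ (Xv m) (Finset.mem_univ i)]
      rw [mul_comm (Xv m i) _, mul_assoc, mul_inv_cancel₀ (Xv_ne m i), mul_one]
      exact (Finset.prod_congr rfl fun j _ => phi_X m j)
  exact hle hf

lemma permMap_Pv (m : ℕ) (σ : Equiv.Perm (Fin m)) : permMap m σ (Pv m) = Pv m := by
  rw [Pv, map_prod]
  exact (Finset.prod_congr rfl fun i _ => permMap_Xv m σ i).trans (Equiv.prod_comp σ (Xv m))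

lemma E_mem_Sym (m : ℕ) (j : ℕ) : E m j ∈ SymLaurentSR m := by
  constructor
  · rw [← phi_esymm]
    exact Subring.closure_mono Set.subset_union_left (phi_mem_closure m _)
  · intro σ
    rw [← phi_esymm, permMap_phi, MvPolynomial.rename_esymm]

lemma Einv_mem_Sym (m : ℕ) : (E m m)⁻¹ ∈ SymLaurentSR m := by
  constructor
  · rw [E_top, Pv, ← Finset.prod_inv_distrib]
    exact prod_mem fun i _ => Subring.subset_closure (Or.inr ⟨i, rfl⟩)
  · intro σ
    rw [map_inv₀, (E_mem_Sym m m).2 σ]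

lemma D_le_Sym (m : ℕ) : Dgen m ≤ SymLaurentSR m := by
  rw [Dgen, Subring.closure_le]
  rintro f (⟨j, rfl⟩ | rfl)
  · exact E_mem_Sym m _
  · exact Einv_mem_Sym m

lemma Sym_le_D (m : ℕ) : SymLaurentSR m ≤ Dgen m := by
  rintro f ⟨hfL, hfS⟩
  obtain ⟨N, G, hG⟩ := exists_clear m hfL
  have hGsym : MvPolynomial.IsSymmetric G := by
    intro σ
    apply phi_inj m
    rw [← permMap_phi, hG, map_mul, map_pow, permMap_Pv, hfS σ]
  obtain ⟨Q, hQ⟩ := MvPolynomial.esymmAlgHom_surjective (σ := Fin m) (R := ℤ) (n := m)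
    (by simp) ⟨G, (MvPolynomial.mem_symmetricSubalgebra G).mpr hGsym⟩
  have hGval : G = MvPolynomial.aeval
      (fun i : Fin m => MvPolynomial.esymm (Fin m) ℤ ((i : ℕ) + 1)) Q := by
    have h := congrArg Subtype.val hQ
    rw [MvPolynomial.esymmAlgHom_apply] at h
    exact h.symm
  set χ : MvPolynomial (Fin m) ℤ →+* KK m := (phi m).comp (MvPolynomial.aeval (R := ℤ)
      (fun i : Fin m => MvPolynomial.esymm (Fin m) ℤ ((i : ℕ) + 1))).toRingHom with hχ
  have hmem : phi m G ∈ Subring.closure (Set.range fun i : Fin m => E m ((i : ℕ) + 1)) := by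
    have h := ringHom_mem χ Q
    have hx : (fun i : Fin m => χ (MvPolynomial.X i))
        = fun i : Fin m => E m ((i : ℕ) + 1) := by
      funext i
      rw [hχ, RingHom.comp_apply]
      have : (MvPolynomial.aeval (R := ℤ)
          (fun i : Fin m => MvPolynomial.esymm (Fin m) ℤ ((i : ℕ) + 1))).toRingHom
            (MvPolynomial.X i)
          = MvPolynomial.esymm (Fin m) ℤ ((i : ℕ) + 1) := MvPolynomial.aeval_X _ i
      rw [this, phi_esymm]
    rw [hx] at h
    have hQG : χ Q = phi m G := by
      rw [hχ, RingHom.comp_apply]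
      congr 1
      exact (congrArg _ rfl).trans hGval.symm
    rwa [hQG] at h
  have hclos : Subring.closure (Set.range fun i : Fin m => E m ((i : ℕ) + 1)) ≤ Dgen m := by
    rw [Subring.closure_le]
    rintro g ⟨i, rfl⟩
    exact E_mem_D m ((i : ℕ) + 1) (by omega)
  have hcancel : ((Pv m)⁻¹) ^ N * ((Pv m) ^ N * f) = f := by
    rw [← mul_assoc, ← mul_pow, inv_mul_cancel₀ (Pv_ne m), one_pow, one_mul]
  have hf' : f = ((E m m)⁻¹) ^ N * phi m G := by
    rw [hG, E_top]
    exact hcancel.symm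
  rw [hf']
  exact mul_mem (pow_mem (Einv_mem_D m) N) (hclos hmem)

end EulerGen

open EulerGen

/-- the H_k, k ∈ ℤ, generate Λ_m^± as a ring. -/
theorem euler_H_generate (m : ℕ) :
    Subring.closure (Set.range fun k : ℤ => Hch (Xv m) k) = SymLaurentSR m := by

  rcases Nat.eq_zero_or_pos m with rfl | hm
  · -- the case m = 0 : both sides are the prime subring
    have hH : ∀ k : ℤ, Hch (Xv 0) k = 1 := by
      intro k
      unfold Hch Eul altSum Vand
      haveI : Subsingleton (Equiv.Perm (Fin 0)) :=
        ⟨fun a b => Equiv.ext fun i => i.elim0⟩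
      rw [Finset.sum_eq_single_of_mem 1 (Finset.mem_univ 1)
        (fun b _ hb => absurd (Subsingleton.elim b 1) hb)]
      have h1 : (Finset.univ : Finset (Fin 0 × Fin 0)) = ∅ := by
        apply Finset.univ_eq_empty
      rw [h1, Finset.filter_empty, Finset.prod_empty]
      simp
    have hrange : (Set.range fun k : ℤ => Hch (Xv 0) k) = {1} := by
      rw [show (fun k : ℤ => Hch (Xv 0) k) = fun _ : ℤ => (1 : KK 0) from funext hH]
      exact Set.range_const
    rw [hrange]
    apply le_antisymm
    · rw [Subring.closure_le]
      rintro f rfl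
      exact one_mem _
    · intro f hf
      have h0 : LaurentSR 0 = ⊥ := by
        rw [LaurentSR]
        have h1 : Set.range (Xv 0) = ∅ := Set.range_eq_empty _
        have h2 : (Set.range fun i : Fin 0 => (Xv 0 i)⁻¹) = ∅ := Set.range_eq_empty _
        rw [h1, h2, Set.empty_union]
        exact le_antisymm (Subring.closure_le.mpr (Set.empty_subset _)) bot_le
      have : f ∈ (⊥ : Subring (KK 0)) := h0 ▸ hf.1
      exact (bot_le : (⊥ : Subring (KK 0)) ≤ Subring.closure {1}) this
  · have hC : Subring.closure (Set.range fun k : ℤ => Hch (Xv m) k) = Cgen m := rfl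
    rw [hC, Cgen_eq_Dgen m hm]
    exact le_antisymm (D_le_Sym m) (Sym_le_D m)

end
end

section
/- Column-deletion minor identity: let A be an n×(n+1) matrix over a commutative ring with columns A_1,...,A_{n+1}. For 1 ≤ l ≤ n+1 let A^{(l)} be the n×n matrix obtained by deleting column A_l, and for a subset I ⊆ {1,...,n} let A(I) be the n×n matrix whose i-th row equals the i-th row of A^{(n+1)} if i ∈ I and the i-th row of A^{(1)} otherwise. Then det A^{(l)} = ∑_{I ⊆ {1,...,n}, |I| = l-1} det A(I). -/
open Finset Polynomial

section Aux
variable {S : Type*} [CommRing S] {n : ℕ}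

/-- Multilinear expansion of a determinant whose rows are sums `M i + x • N i`. -/
lemma det_row_mix (x : S) (M N : Matrix (Fin n) (Fin n) S) :
    (Matrix.of fun i j => M i j + x * N i j).det
      = ∑ s : Finset (Fin n),
          x ^ (n - s.card) *
            (Matrix.of fun i j => if i ∈ s then M i j else N i j).det := by
  classical
  let u : Fin n → Fin n → S := fun i j => M i j
  let v : Fin n → Fin n → S := fun i j => x • N i j
  have key : (Matrix.of fun i j => M i j + x * N i j) = (u + v : Fin n → Fin n → S) := by
    funext i j
    simp [u, v, smul_eq_mul, Matrix.of_apply]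
  let f := (Matrix.detRowAlternating (n := Fin n) (R := S)).toMultilinearMap
  have h2 := f.map_add_univ u v
  show f (Matrix.of fun i j => M i j + x * N i j) = _
  rw [key, h2]
  refine Finset.sum_congr rfl fun s _ => ?_
  have hpw : s.piecewise u v
      = sᶜ.piecewise (fun i => x • (s.piecewise u (fun i j => N i j)) i)
          (s.piecewise u (fun i j => N i j)) := by
    funext i
    by_cases hi : i ∈ s
    · have hi' : i ∉ sᶜ := by simp [hi]
      rw [Finset.piecewise_eq_of_mem _ _ _ hi, Finset.piecewise_eq_of_notMem _ _ _ hi',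
        Finset.piecewise_eq_of_mem _ _ _ hi]
    · have hi' : i ∈ sᶜ := by simp [hi]
      rw [Finset.piecewise_eq_of_notMem _ _ _ hi, Finset.piecewise_eq_of_mem _ _ _ hi',
        Finset.piecewise_eq_of_notMem _ _ _ hi]
      funext j
      rfl
  rw [hpw, MultilinearMap.map_piecewise_smul, Finset.prod_const, Finset.card_compl,
    Fintype.card_fin, smul_eq_mul]
  congr 1
  have hmat : s.piecewise u (fun i j => N i j)
      = ((Matrix.of fun i j => if i ∈ s then M i j else N i j : Matrix (Fin n) (Fin n) S) :
          Fin n → Fin n → S) := by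
    funext i j
    by_cases hi : i ∈ s
    · rw [Finset.piecewise_eq_of_mem _ _ _ hi]
      simp [Matrix.of_apply, hi, u]
    · rw [Finset.piecewise_eq_of_notMem _ _ _ hi]
      simp [Matrix.of_apply, hi]
  rw [hmat]
  rfl

lemma nat_downclosed_eq_range (t : Finset ℕ) (h : ∀ a b : ℕ, a ≤ b → b ∈ t → a ∈ t) :
    t = Finset.range t.card := by
  ext a
  simp only [Finset.mem_range]
  constructor
  · intro ha
    have hsub : Finset.range (a + 1) ⊆ t := by
      intro b hb
      exact h b a (Nat.lt_succ_iff.mp (Finset.mem_range.mp hb)) ha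
    have := Finset.card_le_card hsub
    simp only [Finset.card_range] at this
    omega
  · intro ha
    by_contra hna
    have hsub : t ⊆ Finset.range a := by
      intro b hb
      by_contra hnb
      exact hna (h a b (by simp at hnb; omega) hb)
    have := Finset.card_le_card hsub
    simp only [Finset.card_range] at this
    omega
end Aux

/-- column-deletion minor identity. For an n×(n+1) matrix A,
the determinant of A with column l deleted equals the sum, over subsets I of the rows
of cardinality l (0-based; this is l-1 in 1-based numbering), of the determinants of
the matrices mixing rows of A with the last column deleted (rows in I) and of A with
the first column deleted (rows not in I). -/
theorem column_deletion_minor_identity {R : Type*} [CommRing R] {n : ℕ}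
    (A : Matrix (Fin n) (Fin (n + 1)) R) (l : Fin (n + 1)) :
    (A.submatrix id l.succAbove).det =
      ∑ I ∈ Finset.powersetCard (l : ℕ) (Finset.univ : Finset (Fin n)),
        (Matrix.of fun i j : Fin n =>
          if i ∈ I then A i j.castSucc else A i j.succ).det := by
  classical
  set Rp := Polynomial R with hRp
  set P : Matrix (Fin n) (Fin n) Rp :=
    Matrix.of fun i j => C (A i j.castSucc) + X * C (A i j.succ) with hP
  -- row expansion
  have hrow : P.det = ∑ I : Finset (Fin n),
      X ^ (n - I.card) * C ((Matrix.of fun i j : Fin n =>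
        if i ∈ I then A i j.castSucc else A i j.succ).det) := by
    have e := det_row_mix (X : Rp) (Matrix.of fun i j : Fin n => C (A i j.castSucc))
      (Matrix.of fun i j : Fin n => C (A i j.succ))
    simp only [Matrix.of_apply] at e
    rw [hP, e]
    refine Finset.sum_congr rfl fun I _ => ?_
    congr 1
    rw [RingHom.map_det]
    congr 1
    funext i j
    simp [Matrix.of_apply, RingHom.mapMatrix_apply, Matrix.map_apply, apply_ite C]
  -- cardinality of the downward-closed sets
  have hD : ∀ m : Fin (n + 1),
      ((Finset.univ.filter (fun j : Fin n => (j : ℕ) < (m : ℕ))).card = (m : ℕ)) := by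
    intro m
    have himg : (Finset.univ.filter (fun j : Fin n => (j : ℕ) < (m : ℕ))).image Fin.val
        = Finset.range (m : ℕ) := by
      ext a
      simp only [Finset.mem_image, Finset.mem_filter, Finset.mem_univ, true_and,
        Finset.mem_range]
      constructor
      · rintro ⟨j, hj, rfl⟩; exact hj
      · intro ha
        have := m.isLt
        exact ⟨⟨a, by omega⟩, ha, rfl⟩
    have := congrArg Finset.card himg
    rwa [Finset.card_image_of_injective _ Fin.val_injective, Finset.card_range] at this
  -- column expansion
  have hcol : P.det = ∑ m : Fin (n + 1),
      X ^ (n - (m : ℕ)) * C ((A.submatrix id m.succAbove).det) := by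
    have e := det_row_mix (X : Rp) (Matrix.of fun j i : Fin n => C (A i j.castSucc))
      (Matrix.of fun j i : Fin n => C (A i j.succ))
    simp only [Matrix.of_apply] at e
    have hPt : P.det
        = (Matrix.of fun j i : Fin n => C (A i j.castSucc) + X * C (A i j.succ)).det := by
      rw [← Matrix.det_transpose P]
      congr 1
    rw [hPt, e]
    set g : Finset (Fin n) → Rp := fun s =>
      X ^ (n - s.card) * (Matrix.of fun j i : Fin n =>
        if j ∈ s then C (A i j.castSucc) else C (A i j.succ)).det with hg
    show ∑ s : Finset (Fin n), g s = _
    set D : Fin (n + 1) → Finset (Fin n) :=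
      fun m => Finset.univ.filter (fun j : Fin n => (j : ℕ) < (m : ℕ)) with hDdef
    have hDinj : ∀ x ∈ (Finset.univ : Finset (Fin (n+1))), ∀ y ∈ Finset.univ,
        D x = D y → x = y := by
      intro x _ y _ hxy
      have := congrArg Finset.card hxy
      rw [hDdef] at this
      simp only at this
      rw [hD x, hD y] at this
      exact Fin.ext this
    have hzero : ∀ s : Finset (Fin n), s ∉ Finset.univ.image D → g s = 0 := by
      intro s hs
      by_cases hdc : ∀ j k : Fin n, (j : ℕ) + 1 = (k : ℕ) → k ∈ s → j ∈ s
      · exfalso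
        apply hs
        have hcard : s.card ≤ n := by
          have := Finset.card_le_univ s
          simpa using this
        refine Finset.mem_image.mpr ⟨⟨s.card, by omega⟩, Finset.mem_univ _, ?_⟩
        have ht : s.image Fin.val = Finset.range s.card := by
          have hstep : ∀ a b : ℕ, a ≤ b → b ∈ s.image Fin.val → a ∈ s.image Fin.val := by
            have hone : ∀ a : ℕ, a + 1 ∈ s.image Fin.val → a ∈ s.image Fin.val := by
              intro a ha
              obtain ⟨k, hk, hkv⟩ := Finset.mem_image.mp ha
              have han : a < n := by have := k.isLt; omega
              refine Finset.mem_image.mpr ⟨⟨a, han⟩, hdc ⟨a, han⟩ k (by simp [hkv]) hk, rfl⟩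
            have hd : ∀ d a : ℕ, a + d ∈ s.image Fin.val → a ∈ s.image Fin.val := by
              intro d
              induction d with
              | zero => intro a ha; simpa using ha
              | succ d ih =>
                intro a ha
                exact ih a (hone (a + d) (by rw [show a + d + 1 = a + (d+1) by ring]; exact ha))
            intro a b hab hb
            obtain ⟨d, rfl⟩ := Nat.exists_eq_add_of_le hab
            exact hd d a hb
          have := nat_downclosed_eq_range (s.image Fin.val) hstep
          rwa [Finset.card_image_of_injective _ Fin.val_injective] at this
        rw [hDdef]
        ext j
        simp only [Finset.mem_filter, Finset.mem_univ, true_and]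
        have hj : j ∈ s ↔ (j : ℕ) ∈ s.image Fin.val := by
          constructor
          · intro h; exact Finset.mem_image.mpr ⟨j, h, rfl⟩
          · intro h
            obtain ⟨k, hk, hkv⟩ := Finset.mem_image.mp h
            rwa [show j = k from Fin.ext hkv.symm]
        rw [hj, ht, Finset.mem_range]
      · push_neg at hdc
        obtain ⟨j, k, hjk, hk, hj⟩ := hdc
        have hrows : (Matrix.of fun j i : Fin n =>
            if j ∈ s then C (A i j.castSucc) else C (A i j.succ) :
              Matrix (Fin n) (Fin n) Rp).det = 0 := by
          apply Matrix.det_zero_of_row_eq (i := j) (j := k)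
          · intro h; rw [h] at hjk; omega
          · funext i
            simp only [Matrix.of_apply, if_neg hj, if_pos hk]
            congr 2
            exact Fin.ext (by simp [Fin.val_succ, Fin.coe_castSucc, ← hjk])
        show X ^ (n - s.card) * (Matrix.of fun j i : Fin n =>
            if j ∈ s then C (A i j.castSucc) else C (A i j.succ) :
              Matrix (Fin n) (Fin n) Rp).det = 0
        rw [hrows, mul_zero]
    rw [← Finset.sum_subset (Finset.subset_univ (Finset.univ.image D))
      (fun s _ hs => hzero s hs), Finset.sum_image hDinj]
    refine Finset.sum_congr rfl fun m _ => ?_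
    show X ^ (n - (D m).card) * (Matrix.of fun j i : Fin n =>
        if j ∈ D m then C (A i j.castSucc) else C (A i j.succ) :
          Matrix (Fin n) (Fin n) Rp).det = _
    rw [show (D m).card = (m : ℕ) from hD m]
    congr 1
    rw [RingHom.map_det]
    rw [← Matrix.det_transpose (RingHom.mapMatrix C (A.submatrix id m.succAbove))]
    congr 1
    funext j i
    simp only [hDdef, Matrix.of_apply, Finset.mem_filter, Finset.mem_univ, true_and,
      Matrix.transpose_apply, RingHom.mapMatrix_apply, Matrix.map_apply,
      Matrix.submatrix_apply, id_eq]
    rcases lt_or_ge (j : ℕ) (m : ℕ) with h | h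
    · rw [if_pos h]
      congr 1
      rw [Fin.succAbove, if_pos (by simpa [Fin.lt_def] using h)]
    · rw [if_neg (by omega)]
      congr 1
      rw [Fin.succAbove, if_neg (by simp [Fin.lt_def]; omega)]
  -- coefficient extraction
  have key := hcol.symm.trans hrow
  have hcoeff := congrArg (fun p : Rp => p.coeff (n - (l : ℕ))) key
  beta_reduce at hcoeff
  rw [Polynomial.finset_sum_coeff, Polynomial.finset_sum_coeff] at hcoeff
  have hL : ∀ I : Finset (Fin n),
      (X ^ (n - I.card) * C ((Matrix.of fun i j : Fin n =>
        if i ∈ I then A i j.castSucc else A i j.succ).det) : Rp).coeff (n - (l : ℕ))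
      = if I.card = (l : ℕ) then (Matrix.of fun i j : Fin n =>
          if i ∈ I then A i j.castSucc else A i j.succ).det else 0 := by
    intro I
    rw [Polynomial.coeff_mul_C, Polynomial.coeff_X_pow]
    have hcard : I.card ≤ n := by have := Finset.card_le_univ I; simpa using this
    have hl : (l : ℕ) ≤ n := by have := l.isLt; omega
    by_cases h : I.card = (l : ℕ)
    · rw [if_pos (by omega), if_pos h, one_mul]
    · rw [if_neg (by omega), if_neg h, zero_mul]
  have hR : ∀ m : Fin (n + 1),
      (X ^ (n - (m : ℕ)) * C ((A.submatrix id m.succAbove).det) : Rp).coeff (n - (l : ℕ))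
      = if m = l then (A.submatrix id m.succAbove).det else 0 := by
    intro m
    rw [Polynomial.coeff_mul_C, Polynomial.coeff_X_pow]
    have hm : (m : ℕ) ≤ n := by have := m.isLt; omega
    have hl : (l : ℕ) ≤ n := by have := l.isLt; omega
    by_cases h : m = l
    · rw [if_pos (by rw [h]), if_pos h, one_mul]
    · rw [if_neg (by
        intro hc
        exact h (Fin.ext (by omega))), if_neg h, zero_mul]
  rw [Finset.sum_congr rfl (fun m _ => hR m), Finset.sum_congr rfl (fun I _ => hL I)] at hcoeff
  rw [Finset.sum_ite_eq' Finset.univ l, if_pos (Finset.mem_univ l)] at hcoeff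
  rw [hcoeff, Finset.powersetCard_eq_filter, Finset.powerset_univ, Finset.sum_filter]
end

section
/- For any sequence of integers λ_1,...,λ_{m+1}, the (m+1)×(m+1) determinant det(H_{λ_i - i + j}(x,y))_{1≤i,j≤m+1} = 0, where H_k(x,y) are the supersymmetric Euler functions with m x-variables and n y-variables. -/
open Finset

noncomputable section

variable {F : Type*} [Field F]

/-- h_k(x,y): coefficients of the expansion of ∏(1-y_j t)/∏(1-x_i t) at t = 0
(zero for negative index). -/
def hsup {m n : ℕ} (x : Fin m → F) (y : Fin n → F) (k : ℤ) : F :=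
  if k < 0 then 0 else
    PowerSeries.coeff (R := F) k.toNat
      ((∏ j : Fin n, (1 - PowerSeries.C (R := F) (y j) * PowerSeries.X)) *
        (∏ i : Fin m, (1 - PowerSeries.C (R := F) (x i) * PowerSeries.X))⁻¹)

/-- h_k^{(∞)}(x,y): coefficients of the expansion of ∏(1-y_j t)/∏(1-x_i t) at t = ∞,
given by h_k^{(∞)} = (-1)^{n-m} (y_1⋯y_n)/(x_1⋯x_m) · h*_{n-m-k}. -/
def hinf {m n : ℕ} (x : Fin m → F) (y : Fin n → F) (k : ℤ) : F :=
  (-1 : F) ^ ((n : ℤ) - (m : ℤ)) * ((∏ j, y j) / ∏ i, x i) *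
    hsup (fun i => (x i)⁻¹) (fun j => (y j)⁻¹) ((n : ℤ) - (m : ℤ) - k)

/-- The supersymmetric Euler functions H_k(x,y) = h_k - h_k^{(∞)}. -/
def Hsup {m n : ℕ} (x : Fin m → F) (y : Fin n → F) (k : ℤ) : F :=
  hsup x y k - hinf x y k

/-- The field of rational functions in x_1,…,x_m, y_1,…,y_n over ℚ. -/
abbrev KS (m n : ℕ) := FractionRing (MvPolynomial (Fin m ⊕ Fin n) ℚ)

/-- The x-variables. -/
def Xs (m n : ℕ) (i : Fin m) : KS m n :=
  algebraMap (MvPolynomial (Fin m ⊕ Fin n) ℚ) (KS m n) (MvPolynomial.X (Sum.inl i))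

/-- The y-variables. -/
def Ys (m n : ℕ) (j : Fin n) : KS m n :=
  algebraMap (MvPolynomial (Fin m ⊕ Fin n) ℚ) (KS m n) (MvPolynomial.X (Sum.inr j))

def Ppoly {m : ℕ} (x : Fin m → F) : Polynomial F :=
  ∏ i, (1 - Polynomial.C (x i) * Polynomial.X)

lemma Ppoly_coe {m : ℕ} (x : Fin m → F) :
    ((Ppoly x : Polynomial F) : PowerSeries F)
      = ∏ i, (1 - PowerSeries.C (R := F) (x i) * PowerSeries.X) := by
  rw [Ppoly, ← Polynomial.coeToPowerSeries.ringHom_apply, map_prod]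
  simp

lemma natDeg_factor (a : F) : (1 - Polynomial.C a * Polynomial.X).natDegree ≤ 1 := by
  refine le_trans (Polynomial.natDegree_sub_le _ _) ?_
  simp only [Polynomial.natDegree_one, max_le_iff]
  exact ⟨Nat.zero_le _, le_trans (Polynomial.natDegree_mul_le) (by simp)⟩

lemma Ppoly_natDegree_le {m : ℕ} (x : Fin m → F) : (Ppoly x).natDegree ≤ m := by
  refine le_trans (Polynomial.natDegree_prod_le Finset.univ
    fun i => (1 - Polynomial.C (x i) * Polynomial.X)) ?_
  refine le_trans (Finset.sum_le_sum fun i (_ : i ∈ Finset.univ) => natDeg_factor (x i)) ?_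
  simp

lemma Ppoly_coeff_zero {m : ℕ} (x : Fin m → F) : (Ppoly x).coeff 0 = 1 := by
  have : (Ppoly x).coeff 0 = Polynomial.constantCoeff (Ppoly x) := rfl
  rw [this, Ppoly, map_prod]
  simp

lemma Ppoly_constCoeff {m : ℕ} (x : Fin m → F) :
    PowerSeries.constantCoeff (R := F) (∏ i, (1 - PowerSeries.C (R := F) (x i) * PowerSeries.X)) = 1 := by
  rw [← Ppoly_coe]
  simp [Ppoly_coeff_zero]

/-- coefficient of numerator, ℤ-indexed -/
def qc {n : ℕ} (y : Fin n → F) (k : ℤ) : F :=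
  if k < 0 then 0 else (Ppoly y).coeff k.toNat

lemma qc_eq_zero_of_gt {n : ℕ} (y : Fin n → F) {k : ℤ} (hk : (n : ℤ) < k) : qc y k = 0 := by
  have h0 : ¬ k < 0 := by omega
  rw [qc, if_neg h0]
  apply Polynomial.coeff_eq_zero_of_natDegree_lt
  have := Ppoly_natDegree_le y
  omega

lemma convo {m n : ℕ} (x : Fin m → F) (y : Fin n → F) (k : ℤ) :
    ∑ r ∈ Finset.range (m + 1), (Ppoly x).coeff r * hsup x y (k - r) = qc y k := by
  by_cases hk : k < 0
  · rw [qc, if_pos hk]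
    refine Finset.sum_eq_zero fun r _ => ?_
    rw [hsup, if_pos (by omega), mul_zero]
  · rw [qc, if_neg hk]
    set kn := k.toNat with hkn
    have hkk : k = (kn : ℤ) := by omega
    set d := min m kn with hd
    set P : PowerSeries F := ∏ i, (1 - PowerSeries.C (R := F) (x i) * PowerSeries.X) with hP
    set Q : PowerSeries F := ∏ j, (1 - PowerSeries.C (R := F) (y j) * PowerSeries.X) with hQ
    have hPQ : P * (Q * P⁻¹) = Q := by
      rw [mul_comm Q, ← mul_assoc, PowerSeries.mul_inv_cancel, one_mul]
      rw [hP, Ppoly_constCoeff]; exact one_ne_zero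
    have hQc : (Ppoly y).coeff kn = PowerSeries.coeff (R := F) kn (P * (Q * P⁻¹)) := by
      rw [hPQ, hQ, ← Ppoly_coe, Polynomial.coeff_coe]
    rw [hQc, PowerSeries.coeff_mul, Finset.Nat.sum_antidiagonal_eq_sum_range_succ_mk]
    have h1 : ∑ r ∈ Finset.range (m + 1), (Ppoly x).coeff r * hsup x y (k - r)
        = ∑ r ∈ Finset.range (d + 1), (Ppoly x).coeff r * hsup x y (k - r) := by
      refine (Finset.sum_subset (Finset.range_subset_range.2 (by omega)) fun r hr hr' => ?_).symm
      simp only [Finset.mem_range, not_lt] at hr hr'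
      rw [hsup, if_pos (by omega), mul_zero]
    have h2 : ∑ r ∈ Finset.range (kn + 1),
          PowerSeries.coeff (R := F) r P * PowerSeries.coeff (R := F) (kn - r) (Q * P⁻¹)
        = ∑ r ∈ Finset.range (d + 1),
          PowerSeries.coeff (R := F) r P * PowerSeries.coeff (R := F) (kn - r) (Q * P⁻¹) := by
      refine (Finset.sum_subset (Finset.range_subset_range.2 (by omega)) fun r hr hr' => ?_).symm
      simp only [Finset.mem_range, not_lt] at hr hr'
      have : PowerSeries.coeff (R := F) r P = 0 := by
        rw [hP, ← Ppoly_coe, Polynomial.coeff_coe]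
        exact Polynomial.coeff_eq_zero_of_natDegree_lt
          (lt_of_le_of_lt (Ppoly_natDegree_le x) (by omega))
      rw [this, zero_mul]
    rw [h1, h2]
    refine Finset.sum_congr rfl fun r hr => ?_
    simp only [Finset.mem_range] at hr
    congr 1
    · rw [hP, ← Ppoly_coe, Polynomial.coeff_coe]
    · rw [hsup, if_neg (by omega)]
      congr 2
      omega

lemma reverse_prod {ι : Type*} (s : Finset ι) (f : ι → Polynomial F) :
    (∏ i ∈ s, f i).reverse = ∏ i ∈ s, (f i).reverse := by
  induction s using Finset.cons_induction with
  | empty => simp [Polynomial.reverse, Polynomial.reflect_C 1 0]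
  | cons a s ha ih => rw [Finset.prod_cons, Finset.prod_cons,
      Polynomial.reverse_mul_of_domain, ih]

lemma factor_eq (a : F) : (1 : Polynomial F) - Polynomial.C a * Polynomial.X
    = Polynomial.C (-a) * Polynomial.X + Polynomial.C 1 := by
  simp only [map_neg, map_one, neg_mul]
  ring

lemma natDeg_factor_eq (a : F) (ha : a ≠ 0) :
    ((1 : Polynomial F) - Polynomial.C a * Polynomial.X).natDegree = 1 := by
  rw [factor_eq]
  exact Polynomial.natDegree_linear (neg_ne_zero.2 ha)

lemma reverse_factor (a : F) (ha : a ≠ 0) :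
    ((1 : Polynomial F) - Polynomial.C a * Polynomial.X).reverse
      = Polynomial.C (-a) * ((1 : Polynomial F) - Polynomial.C a⁻¹ * Polynomial.X) := by
  rw [Polynomial.reverse, natDeg_factor_eq a ha, factor_eq]
  rw [Polynomial.reflect_add, Polynomial.reflect_C_mul, Polynomial.reflect_C 1 1,
    ← pow_one (Polynomial.X (R := F)), Polynomial.reflect_monomial]
  simp [Polynomial.revAt]
  have h2 : Polynomial.C a * (Polynomial.C a⁻¹ * Polynomial.X) = Polynomial.X := by
    rw [← mul_assoc, ← Polynomial.C_mul, mul_inv_cancel₀ ha, Polynomial.C_1, one_mul]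
  rw [mul_sub, h2]
  have h3 : (Polynomial.X : Polynomial F) ^ (Polynomial.revAt 1 1) = 1 := by
    simp [Polynomial.revAt_le]
  erw [h3]
  ring

lemma Ppoly_natDegree {m : ℕ} (x : Fin m → F) (hx : ∀ i, x i ≠ 0) :
    (Ppoly x).natDegree = m := by
  rw [Ppoly, Polynomial.natDegree_prod]
  · simp [natDeg_factor_eq _ (hx _)]
  · intro i _
    intro h
    have := congrArg (fun p => Polynomial.coeff p 0) h
    simp at this

lemma Ppoly_reverse {m : ℕ} (x : Fin m → F) (hx : ∀ i, x i ≠ 0) :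
    (Ppoly x).reverse = Polynomial.C ((-1) ^ m * ∏ i, x i) * Ppoly (fun i => (x i)⁻¹) := by
  rw [Ppoly, reverse_prod]
  rw [Finset.prod_congr rfl fun i _ => reverse_factor (x i) (hx i)]
  rw [Finset.prod_mul_distrib, ← map_prod]
  congr 1
  · congr 1
    rw [show (fun i => -x i) = (fun i => (-1) * x i) by funext i; ring]
    rw [Finset.prod_mul_distrib]
    simp

lemma Ppoly_inv_coeff {m : ℕ} (x : Fin m → F) (hx : ∀ i, x i ≠ 0) {r : ℕ} (hr : r ≤ m) :
    (Ppoly x).coeff (m - r) = ((-1) ^ m * ∏ i, x i) * (Ppoly fun i => (x i)⁻¹).coeff r := by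
  have h := congrArg (fun p => Polynomial.coeff p r) (Ppoly_reverse x hx)
  simp only [Polynomial.coeff_C_mul] at h
  rw [Polynomial.coeff_reverse, Ppoly_natDegree x hx,
    Polynomial.revAt_le hr] at h
  exact h

lemma convoInf {m n : ℕ} (x : Fin m → F) (y : Fin n → F)
    (hx : ∀ i, x i ≠ 0) (hy : ∀ j, y j ≠ 0) (k : ℤ) :
    ∑ r ∈ Finset.range (m + 1), (Ppoly x).coeff r * hinf x y (k - r) = qc y k := by
  have hxp : (∏ i, x i) ≠ 0 := Finset.prod_ne_zero_iff.2 fun i _ => hx i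
  have hyp : (∏ j, y j) ≠ 0 := Finset.prod_ne_zero_iff.2 fun j _ => hy j
  set c : F := (-1 : F) ^ ((n : ℤ) - (m : ℤ)) * ((∏ j, y j) / ∏ i, x i) with hc
  set S : F := (-1) ^ m * (∏ i, x i) * c with hS
  have key : ∑ r ∈ Finset.range (m + 1), (Ppoly x).coeff r * hinf x y (k - r)
      = S * qc (fun j => (y j)⁻¹) ((n : ℤ) - k) := by
    rw [← Finset.sum_range_reflect]
    rw [← convo (fun i => (x i)⁻¹) (fun j => (y j)⁻¹) ((n : ℤ) - k), Finset.mul_sum]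
    refine Finset.sum_congr rfl fun r hr => ?_
    simp only [Finset.mem_range] at hr
    have hrm : r ≤ m := by omega
    rw [show m + 1 - 1 - r = m - r from rfl]
    rw [hinf, Ppoly_inv_coeff x hx hrm]
    have hcast : (n : ℤ) - (m : ℤ) - (k - ((m - r : ℕ) : ℤ)) = (n : ℤ) - k - r := by
      push_cast [hrm]
      omega
    rw [hcast, hS]
    ring
  rw [key]
  have hSval : S = (-1 : F) ^ n * (∏ j, y j) := by
    rw [hS, hc]
    have h1 : ((-1 : F) ^ m) * (-1 : F) ^ ((n : ℤ) - (m : ℤ)) = (-1 : F) ^ n := by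
      rw [← zpow_natCast (-1 : F) m, ← zpow_add₀ (by norm_num : (-1 : F) ≠ 0),
        ← zpow_natCast (-1 : F) n]
      congr 1
      ring
    field_simp
    rw [← h1]
  by_cases h1 : k < 0
  · rw [qc_eq_zero_of_gt _ (show (n : ℤ) < (n : ℤ) - k by omega), mul_zero, qc, if_pos h1]
  · by_cases h2 : (n : ℤ) < k
    · rw [qc, if_pos (show (n : ℤ) - k < 0 by omega), mul_zero, qc_eq_zero_of_gt _ h2]
    · rw [qc, if_neg (show ¬ ((n : ℤ) - k < 0) by omega), qc, if_neg h1]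
      have hnk : ((n : ℤ) - k).toNat = n - k.toNat := by omega
      have hle : n - k.toNat ≤ n := Nat.sub_le _ _
      rw [hnk, hSval]
      have hco := Ppoly_inv_coeff y hy hle
      have hmm : n - (n - k.toNat) = k.toNat := by omega
      rw [hmm] at hco
      exact hco.symm

lemma Hsup_vanish {m n : ℕ} (x : Fin m → F) (y : Fin n → F)
    (hx : ∀ i, x i ≠ 0) (hy : ∀ j, y j ≠ 0) (k : ℤ) :
    ∑ r ∈ Finset.range (m + 1), (Ppoly x).coeff r * Hsup x y (k - r) = 0 := by
  simp only [Hsup, mul_sub]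
  rw [Finset.sum_sub_distrib, convo, convoInf x y hx hy, sub_self]

/-- for any integers λ_1,…,λ_{m+1},
det(H_{λ_i-i+j}(x,y))_{1≤i,j≤m+1} = 0 in m x-variables and n y-variables. -/
theorem supersym_jacobi_trudy_vanishing (m n : ℕ) (l : Fin (m + 1) → ℤ) :
    (Matrix.of fun i j : Fin (m + 1) =>
        Hsup (Xs m n) (Ys m n) (l i - (i : ℤ) + (j : ℤ))).det = 0 := by
  have hx : ∀ i, Xs m n i ≠ 0 := fun i => by
    rw [Xs, Ne, IsFractionRing.to_map_eq_zero_iff]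
    exact MvPolynomial.X_ne_zero _
  have hy : ∀ j, Ys m n j ≠ 0 := fun j => by
    rw [Ys, Ne, IsFractionRing.to_map_eq_zero_iff]
    exact MvPolynomial.X_ne_zero _
  rw [← Matrix.exists_mulVec_eq_zero_iff]
  refine ⟨fun j => (Ppoly (Xs m n)).coeff (m - (j : ℕ)), ?_, ?_⟩
  · intro h
    have h2 := congrFun h (Fin.last m)
    simp only [Fin.val_last, Nat.sub_self, Ppoly_coeff_zero, Pi.zero_apply] at h2
    exact one_ne_zero h2
  · funext i
    have h0 := Hsup_vanish (Xs m n) (Ys m n) hx hy (l i - (i : ℤ) + (m : ℤ))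
    rw [← Finset.sum_range_reflect] at h0
    show ∑ j : Fin (m + 1), Hsup (Xs m n) (Ys m n) (l i - (i : ℤ) + (j : ℤ))
        * (Ppoly (Xs m n)).coeff (m - (j : ℕ)) = 0
    rw [Fin.sum_univ_eq_sum_range fun j =>
      Hsup (Xs m n) (Ys m n) (l i - (i : ℤ) + (j : ℤ)) * (Ppoly (Xs m n)).coeff (m - j)]
    rw [← h0]
    refine Finset.sum_congr rfl fun r hr => ?_
    simp only [Finset.mem_range] at hr
    have hrm : r ≤ m := by omega
    rw [show m + 1 - 1 - r = m - r from rfl]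
    rw [mul_comm]
    congr 1
    have : ((m - r : ℕ) : ℤ) = (m : ℤ) - (r : ℤ) := by omega
    rw [this]
    ring
end
end

section
/- Dual Jacobi–Trudy (conjugation) identity: let a_i, b_i (i ≥ 0) be elements of a commutative ring with a_0 = b_0 = 1 and (∑_{i≥0} a_i t^i)(∑_{i≥0} b_i t^i) = 1 as formal power series. Then for any partition λ with at most p parts and λ_1 ≤ r, det(a_{λ_i - i + j})_{1≤i,j≤p} = (-1)^{|λ|} det(b_{λ'_i - i + j})_{1≤i,j≤r}, where λ' is the conjugate partition (and a_k = b_k = 0 for k < 0). -/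
open Finset

namespace DJT

variable (p r : ℕ)

/-- conjugate partition entry (0-indexed): number of parts strictly bigger than `j`. -/
def conj (l : Fin p → ℕ) (j : ℕ) : ℕ := (Finset.univ.filter fun t : Fin p => j < l t).card

lemma conj_le (l : Fin p → ℕ) (j : ℕ) : conj p l j ≤ p := by
  classical
  calc (Finset.univ.filter fun t : Fin p => j < l t).card
      ≤ (Finset.univ : Finset (Fin p)).card := Finset.card_filter_le _ _
    _ = p := by simp

lemma conj_anti (l : Fin p → ℕ) : Antitone (conj p l) := by
  intro j j' h
  apply Finset.card_le_card
  intro t ht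
  simp only [Finset.mem_filter, Finset.mem_univ, true_and] at *
  omega

lemma conj_zero (j : ℕ) : conj p (fun _ => 0) j = 0 := by
  simp [conj]

lemma conj_key (l : Fin p → ℕ) (hl : Antitone l) (i : Fin p) (j : ℕ) :
    l i + conj p l j ≠ i.val + j + 1 := by
  rcases lt_or_ge j (l i) with h | h
  · have hsub : Finset.Iic i ⊆ Finset.univ.filter fun t : Fin p => j < l t := by
      intro t ht
      simp only [Finset.mem_Iic] at ht
      simp only [Finset.mem_filter, Finset.mem_univ, true_and]
      exact lt_of_lt_of_le h (hl ht)
    have h2 := Finset.card_le_card hsub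
    rw [Fin.card_Iic] at h2
    unfold conj
    omega
  · have hsub : (Finset.univ.filter fun t : Fin p => j < l t) ⊆ Finset.Iio i := by
      intro t ht
      simp only [Finset.mem_filter, Finset.mem_univ, true_and] at ht
      simp only [Finset.mem_Iio]
      by_contra hc
      push_neg at hc
      have := hl hc
      omega
    have h2 := Finset.card_le_card hsub
    rw [Fin.card_Iio] at h2
    unfold conj
    omega

/-- the underlying function of the permutation built out of `l`. -/
def gmap (l : Fin p → ℕ) : Fin p ⊕ Fin r → ℕ :=
  Sum.elim (fun i => l i + (p - 1 - i.val)) (fun j => p + j.val - conj p l j.val)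

lemma gmap_lt (l : Fin p → ℕ) (hlr : ∀ i, l i ≤ r) (x : Fin p ⊕ Fin r) :
    gmap p r l x < p + r := by
  rcases x with i | j
  · have h1 := hlr i
    have h2 := i.isLt
    simp only [gmap, Sum.elim_inl]
    omega
  · have h2 := j.isLt
    simp only [gmap, Sum.elim_inr]
    omega

lemma gmap_inj (l : Fin p → ℕ) (hl : Antitone l) :
    ∀ x y : Fin p ⊕ Fin r, gmap p r l x = gmap p r l y → x = y := by
  intro x y h
  rcases x with i | j <;> rcases y with i' | j'
  · simp only [gmap, Sum.elim_inl] at h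
    have : i = i' := by
      rcases lt_trichotomy i i' with hc | hc | hc
      · have h1 := hl hc.le
        have h2 : i.val < i'.val := hc
        have h3 := i'.isLt
        omega
      · exact hc
      · have h1 := hl hc.le
        have h2 : i'.val < i.val := hc
        have h3 := i.isLt
        omega
    rw [this]
  · exfalso
    simp only [gmap, Sum.elim_inl, Sum.elim_inr] at h
    have hk := conj_key p l hl i j'.val
    have hc := conj_le p l j'.val
    have h3 := i.isLt
    omega
  · exfalso
    simp only [gmap, Sum.elim_inl, Sum.elim_inr] at h
    have hk := conj_key p l hl i' j.val
    have hc := conj_le p l j.val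
    have h3 := i'.isLt
    omega
  · simp only [gmap, Sum.elim_inr] at h
    have : j = j' := by
      rcases lt_trichotomy j j' with hc | hc | hc
      · have h1 := conj_anti p l (le_of_lt (show j.val < j'.val from hc))
        have h2 : j.val < j'.val := hc
        have hc1 := conj_le p l j.val
        have hc2 := conj_le p l j'.val
        omega
      · exact hc
      · have h1 := conj_anti p l (le_of_lt (show j'.val < j.val from hc))
        have h2 : j'.val < j.val := hc
        have hc1 := conj_le p l j.val
        have hc2 := conj_le p l j'.val
        omega
    rw [this]

/-- the permutation (as an equivalence `Fin p ⊕ Fin r ≃ Fin (p+r)`) attached to `l`. -/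
noncomputable def sigma (l : Fin p → ℕ) (hl : Antitone l) (hlr : ∀ i, l i ≤ r) :
    (Fin p ⊕ Fin r) ≃ Fin (p + r) :=
  Equiv.ofBijective (fun x => ⟨gmap p r l x, gmap_lt p r l hlr x⟩)
    ((Fintype.bijective_iff_injective_and_card _).mpr
      ⟨fun x y h => gmap_inj p r l hl x y (congrArg Fin.val h), by simp⟩)

@[simp] lemma sigma_apply (l : Fin p → ℕ) (hl : Antitone l) (hlr : ∀ i, l i ≤ r)
    (x : Fin p ⊕ Fin r) :
    (sigma p r l hl hlr x : ℕ) = gmap p r l x := rfl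

/-- the permutation attached to the empty partition. -/
noncomputable def tau : (Fin p ⊕ Fin r) ≃ Fin (p + r) :=
  sigma p r (fun _ => 0) (fun _ _ _ => le_rfl) (fun _ => Nat.zero_le r)

lemma sign_sigma : ∀ (n : ℕ) (l : Fin p → ℕ) (hl : Antitone l) (hlr : ∀ i, l i ≤ r),
    (∑ i, l i) = n →
    Equiv.Perm.sign ((sigma p r l hl hlr).trans (tau p r).symm) = (-1) ^ n := by
  intro n
  induction n with
  | zero =>
    intro l hl hlr hsum
    have hl0 : ∀ i, l i = 0 := by
      intro i
      have := Finset.sum_eq_zero_iff.mp hsum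
      exact this i (Finset.mem_univ i)
    have hls : sigma p r l hl hlr = tau p r := by
      apply Equiv.ext
      intro x
      apply Fin.val_injective
      rcases x with i | j
      · simp [sigma, tau, gmap, hl0]
      · have : conj p l j.val = 0 := by
          simp [conj, hl0]
        simp [sigma, tau, gmap, this, conj_zero]
    rw [hls, Equiv.self_trans_symm]
    simp
  | succ n ih =>
    intro l hl hlr hsum
    classical
    -- find the last nonzero row
    have hne : (Finset.univ.filter fun i : Fin p => l i ≠ 0).Nonempty := by
      by_contra hc
      rw [Finset.not_nonempty_iff_eq_empty, Finset.filter_eq_empty_iff] at hc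
      have : (∑ i, l i) = 0 := Finset.sum_eq_zero (by
        intro i hi
        have := hc (Finset.mem_univ i)
        simpa using this)
      omega
    set i₀ : Fin p := (Finset.univ.filter fun i : Fin p => l i ≠ 0).max' hne with hi₀def
    have hi₀mem : i₀ ∈ Finset.univ.filter fun i : Fin p => l i ≠ 0 :=
      Finset.max'_mem _ hne
    have hi₀ : l i₀ ≠ 0 := by
      simpa using hi₀mem
    have hgt : ∀ t : Fin p, i₀ < t → l t = 0 := by
      intro t ht
      by_contra hc
      have : t ∈ Finset.univ.filter fun i : Fin p => l i ≠ 0 := by simpa using hc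
      have := Finset.le_max' _ t this
      rw [← hi₀def] at this
      exact absurd ht (not_lt.mpr this)
    set j₀ : ℕ := l i₀ - 1 with hj₀def
    set l' : Fin p → ℕ := Function.update l i₀ j₀ with hl'def
    have hl'app : ∀ t, l' t = if t = i₀ then j₀ else l t := by
      intro t
      simp [hl'def, Function.update_apply]
    have hl' : Antitone l' := by
      intro x y hxy
      rw [hl'app, hl'app]
      by_cases hx : x = i₀ <;> by_cases hy : y = i₀ <;> simp [hx, hy]
      · -- x = i₀, y ≠ i₀, x ≤ y so i₀ < y, l y = 0
        have : i₀ < y := lt_of_le_of_ne (hx ▸ hxy) (Ne.symm hy)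
        have := hgt y this
        omega
      · -- y = i₀, x ≠ i₀ : need j₀ ≤ l x; x ≤ i₀
        have hxle : x ≤ i₀ := hy ▸ hxy
        have := hl hxle
        omega
      · exact hl hxy
    have hlr' : ∀ i, l' i ≤ r := by
      intro i
      rw [hl'app]
      split
      · have := hlr i₀; omega
      · exact hlr i
    have hsum' : (∑ i, l' i) = n := by
      have h1 := Finset.sum_update_of_mem (Finset.mem_univ i₀) l j₀
      rw [Finset.sdiff_singleton_eq_erase] at h1
      have h2 := Finset.add_sum_erase Finset.univ l (Finset.mem_univ i₀)
      rw [hl'def, h1]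
      omega
    have hj₀r : j₀ < r := by
      have := hlr i₀; omega
    -- conjugate facts
    have hconj : conj p l j₀ = i₀.val + 1 := by
      have : (Finset.univ.filter fun t : Fin p => j₀ < l t) = Finset.Iic i₀ := by
        apply Finset.ext
        intro t
        simp only [Finset.mem_filter, Finset.mem_univ, true_and, Finset.mem_Iic]
        constructor
        · intro h
          by_contra hc
          push_neg at hc
          have := hgt t hc
          omega
        · intro h
          have := hl h
          omega
      unfold conj
      rw [this, Fin.card_Iic]
    have hconj' : conj p l' j₀ = i₀.val := by
      have : (Finset.univ.filter fun t : Fin p => j₀ < l' t) = Finset.Iio i₀ := by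
        apply Finset.ext
        intro t
        simp only [Finset.mem_filter, Finset.mem_univ, true_and, Finset.mem_Iio]
        rw [hl'app]
        by_cases ht : t = i₀
        · simp [ht]
        · simp only [ht, if_false]
          constructor
          · intro h
            rcases lt_or_ge t i₀ with hc | hc
            · exact hc
            · have : i₀ < t := lt_of_le_of_ne hc (Ne.symm ht)
              have := hgt t this
              omega
          · intro h
            have := hl h.le
            omega
      unfold conj
      rw [this, Fin.card_Iio]
    have hconjeq : ∀ j : ℕ, j ≠ j₀ → conj p l' j = conj p l j := by
      intro j hj
      unfold conj
      congr 1
      apply Finset.ext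
      intro t
      simp only [Finset.mem_filter, Finset.mem_univ, true_and]
      rw [hl'app]
      by_cases ht : t = i₀
      · rw [if_pos ht, ht]
        omega
      · rw [if_neg ht]
    -- the two swapped values
    set σ := sigma p r l hl hlr with hσdef
    set σ' := sigma p r l' hl' hlr' with hσ'def
    set a₁ : Fin (p + r) := σ (Sum.inl i₀) with ha₁def
    set a₂ : Fin (p + r) := σ (Sum.inr ⟨j₀, hj₀r⟩) with ha₂def
    have ha₁val : (a₁ : ℕ) = l i₀ + (p - 1 - i₀.val) := rfl
    have ha₂val : (a₂ : ℕ) = p + j₀ - conj p l j₀ := rfl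
    have hane : a₁ ≠ a₂ := by
      intro hc
      have h1 := congrArg Fin.val hc
      rw [ha₁val, ha₂val, hconj] at h1
      have := i₀.isLt
      omega
    have hσ'σ : σ' = σ.trans (Equiv.swap a₁ a₂) := by
      apply Equiv.ext
      intro x
      rw [Equiv.trans_apply]
      rcases x with i | j
      · by_cases hi : i = i₀
        · rw [hi, ← ha₁def, Equiv.swap_apply_left]
          apply Fin.val_injective
          have h1 : (σ' (Sum.inl i₀) : ℕ) = l' i₀ + (p - 1 - i₀.val) := rfl
          have h2 : l' i₀ = j₀ := by rw [hl'app]; simp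
          rw [ha₂val, hconj, h1, h2]
          have := i₀.isLt
          omega
        · have hne1 : σ (Sum.inl i) ≠ a₁ := by
            intro hc
            exact hi (Sum.inl_injective (σ.injective hc))
          have hne2 : σ (Sum.inl i) ≠ a₂ := by
            intro hc
            exact Sum.inl_ne_inr (σ.injective hc)
          rw [Equiv.swap_apply_of_ne_of_ne hne1 hne2]
          apply Fin.val_injective
          have h1 : (σ' (Sum.inl i) : ℕ) = l' i + (p - 1 - i.val) := rfl
          have h2 : (σ (Sum.inl i) : ℕ) = l i + (p - 1 - i.val) := rfl
          rw [h1, h2, hl'app]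
          simp [hi]
      · by_cases hj : j = ⟨j₀, hj₀r⟩
        · rw [hj, ← ha₂def, Equiv.swap_apply_right]
          apply Fin.val_injective
          rw [ha₁val]
          have h1 : (σ' (Sum.inr ⟨j₀, hj₀r⟩) : ℕ) = p + j₀ - conj p l' j₀ := rfl
          rw [h1, hconj']
          have hli₀ : l i₀ = j₀ + 1 := by omega
          have := i₀.isLt
          omega
        · have hjv : j.val ≠ j₀ := by
            intro hc
            exact hj (Fin.val_injective hc)
          have hne1 : σ (Sum.inr j) ≠ a₁ := by
            intro hc
            exact Sum.inr_ne_inl (σ.injective hc)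
          have hne2 : σ (Sum.inr j) ≠ a₂ := by
            intro hc
            exact hj (Sum.inr_injective (σ.injective hc))
          rw [Equiv.swap_apply_of_ne_of_ne hne1 hne2]
          apply Fin.val_injective
          have h1 : (σ' (Sum.inr j) : ℕ) = p + j.val - conj p l' j.val := rfl
          have h2 : (σ (Sum.inr j) : ℕ) = p + j.val - conj p l j.val := rfl
          rw [h1, h2, hconjeq j.val hjv]
    -- relate the two permutations of the sum type
    have hIH := ih l' hl' hlr' hsum'
    set τ := tau p r with hτdef
    have hswap : ∀ y : Fin (p + r), τ.symm (Equiv.swap a₁ a₂ y) =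
        Equiv.swap (τ.symm a₁) (τ.symm a₂) (τ.symm y) := by
      intro y
      rcases eq_or_ne y a₁ with h | h
      · rw [h, Equiv.swap_apply_left, Equiv.swap_apply_left]
      rcases eq_or_ne y a₂ with h2 | h2
      · rw [h2, Equiv.swap_apply_right, Equiv.swap_apply_right]
      · rw [Equiv.swap_apply_of_ne_of_ne h h2,
          Equiv.swap_apply_of_ne_of_ne (fun hc => h (τ.symm.injective hc))
            (fun hc => h2 (τ.symm.injective hc))]
    have hperm : σ'.trans τ.symm =
        (Equiv.swap (τ.symm a₁) (τ.symm a₂)) * (σ.trans τ.symm) := by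
      apply Equiv.ext
      intro x
      rw [Equiv.Perm.mul_apply]
      simp only [Equiv.trans_apply, hσ'σ]
      exact hswap (σ x)
    rw [hperm] at hIH
    rw [map_mul, Equiv.Perm.sign_swap (fun hc => hane (τ.symm.injective hc))] at hIH
    have : Equiv.Perm.sign ((sigma p r l hl hlr).trans (tau p r).symm) =
        (-1) * ((-1) * Equiv.Perm.sign ((sigma p r l hl hlr).trans (tau p r).symm)) := by
      rw [← mul_assoc]
      norm_num
    rw [this, hIH, pow_succ, mul_comm]

end DJT

/-- dual Jacobi–Trudy (conjugation) identity.  If (∑ a_i t^i)(∑ b_i t^i) = 1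
with a_0 = b_0 = 1 (and a_k = b_k = 0 for k < 0), and λ is a partition with at most p
parts and parts at most r, then det(a_{λ_i-i+j})_{p×p} = (-1)^{|λ|} det(b_{λ'_i-i+j})_{r×r},
where λ'_i = #{j : λ_j ≥ i} is the conjugate partition. -/
theorem dual_jacobi_trudy {A : Type*} [CommRing A] (p r : ℕ) (a b : ℤ → A)
    (ha0 : a 0 = 1) (hb0 : b 0 = 1)
    (haneg : ∀ k : ℤ, k < 0 → a k = 0) (hbneg : ∀ k : ℤ, k < 0 → b k = 0)
    (hab : (PowerSeries.mk fun i : ℕ => a (i : ℤ)) *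
        (PowerSeries.mk fun i : ℕ => b (i : ℤ)) = 1)
    (l : Fin p → ℕ) (hl : Antitone l) (hlr : ∀ i, l i ≤ r) :
    (Matrix.of fun i j : Fin p => a ((l i : ℤ) - (i : ℤ) + (j : ℤ))).det =
      (-1) ^ (∑ i, l i) *
        (Matrix.of fun i j : Fin r =>
          b (((Finset.univ.filter fun t : Fin p => (i : ℕ) < l t).card : ℤ)
              - (i : ℤ) + (j : ℤ))).det := by
  classical
  -- the coefficient identity from the power series hypothesis
  have hcoeff : ∀ n : ℕ, (∑ k ∈ Finset.range (n + 1), a (k : ℤ) * b (((n - k : ℕ)) : ℤ)) =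
      if n = 0 then 1 else 0 := by
    intro n
    have h := congrArg (PowerSeries.coeff (R := A) n) hab
    rw [PowerSeries.coeff_mul, PowerSeries.coeff_one,
      Finset.Nat.sum_antidiagonal_eq_sum_range_succ_mk] at h
    simpa [PowerSeries.coeff_mk] using h
  -- the big Toeplitz matrices
  set N := p + r with hN
  set AA : Matrix (Fin N) (Fin N) A := Matrix.of fun i j => a ((i : ℤ) - (j : ℤ)) with hAA
  set BB : Matrix (Fin N) (Fin N) A := Matrix.of fun i j => b ((i : ℤ) - (j : ℤ)) with hBB
  have hAAapp : ∀ i j : Fin N, AA i j = a ((i : ℤ) - (j : ℤ)) := by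
    intro i j; rw [hAA]; rfl
  have hBBapp : ∀ i j : Fin N, BB i j = b ((i : ℤ) - (j : ℤ)) := by
    intro i j; rw [hBB]; rfl
  have hABone : AA * BB = 1 := by
    ext i j
    rw [Matrix.mul_apply]
    rcases le_or_gt (j : ℕ) (i : ℕ) with hij | hij
    · -- reindex to a range sum
      set n := (i : ℕ) - (j : ℕ) with hn
      have hstep1 : (∑ k : Fin N, AA i k * BB k j) =
          ∑ k ∈ (Finset.univ : Finset (Fin N)).filter
            (fun k : Fin N => (j : ℕ) ≤ (k : ℕ) ∧ (k : ℕ) ≤ (i : ℕ)), AA i k * BB k j := by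
        symm
        apply Finset.sum_subset (Finset.subset_univ _)
        intro k _ hk
        simp only [Finset.mem_filter, Finset.mem_univ, true_and, not_and_or, not_le] at hk
        rcases hk with hk | hk
        · rw [hBBapp k j, hbneg ((k : ℤ) - (j : ℤ)) (by omega), mul_zero]
        · rw [hAAapp i k, haneg ((i : ℤ) - (k : ℤ)) (by omega), zero_mul]
      have hstep2 : (∑ k ∈ (Finset.univ : Finset (Fin N)).filter
            (fun k : Fin N => (j : ℕ) ≤ (k : ℕ) ∧ (k : ℕ) ≤ (i : ℕ)), AA i k * BB k j) =
          ∑ q ∈ Finset.range (n + 1), a (q : ℤ) * b (((n - q : ℕ)) : ℤ) := by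
        refine Finset.sum_bij' (i := fun k _ => (i : ℕ) - (k : ℕ))
          (j := fun q hq => (⟨(i : ℕ) - q, by
            have := i.isLt
            simp only [Finset.mem_range] at hq
            omega⟩ : Fin N)) ?_ ?_ ?_ ?_ ?_
        · intro k hk
          simp only [Finset.mem_filter, Finset.mem_univ, true_and] at hk
          simp only [Finset.mem_range]
          omega
        · intro q hq
          simp only [Finset.mem_range] at hq
          simp only [Finset.mem_filter, Finset.mem_univ, true_and]
          show (j : ℕ) ≤ (i : ℕ) - q ∧ (i : ℕ) - q ≤ (i : ℕ)
          omega
        · intro k hk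
          simp only [Finset.mem_filter, Finset.mem_univ, true_and] at hk
          apply Fin.val_injective
          show (i : ℕ) - ((i : ℕ) - (k : ℕ)) = (k : ℕ)
          omega
        · intro q hq
          simp only [Finset.mem_range] at hq
          show (i : ℕ) - ((i : ℕ) - q) = q
          omega
        · intro k hk
          simp only [Finset.mem_filter, Finset.mem_univ, true_and] at hk
          have h1 : ((i : ℤ) - (k : ℤ)) = ((((i : ℕ) - (k : ℕ) : ℕ)) : ℤ) := by omega
          have h2 : ((k : ℤ) - (j : ℤ)) = (((n - ((i : ℕ) - (k : ℕ)) : ℕ)) : ℤ) := by omega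
          rw [hAAapp i k, hBBapp k j, h1, h2]
      rw [hstep1, hstep2, hcoeff n, Matrix.one_apply]
      have hiff : n = 0 ↔ i = j := by
        rw [Fin.ext_iff]; omega
      by_cases h0 : n = 0
      · rw [if_pos h0, if_pos (hiff.mp h0)]
      · rw [if_neg h0, if_neg (fun hc => h0 (hiff.mpr hc))]
    · have h0 : (∑ k : Fin N, AA i k * BB k j) = 0 := by
        apply Finset.sum_eq_zero
        intro k _
        rcases le_or_gt (k : ℕ) (i : ℕ) with hk | hk
        · rw [hBBapp k j, hbneg ((k : ℤ) - (j : ℤ)) (by omega), mul_zero]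
        · rw [hAAapp i k, haneg ((i : ℤ) - (k : ℤ)) (by omega), zero_mul]
      rw [h0, Matrix.one_apply, if_neg (fun hc => by rw [hc] at hij; omega)]
  -- determinant of AA is 1
  have hdetAA : AA.det = 1 := by
    rw [Matrix.det_of_lowerTriangular AA (by
      intro i j hji
      have hlt : (i : ℕ) < (j : ℕ) := hji
      rw [hAAapp i j]
      exact haneg _ (by omega))]
    have hdiag : ∀ i : Fin N, AA i i = 1 := by
      intro i
      rw [hAAapp i i, sub_self, ha0]
    simp [hdiag]
  -- the permutations
  set σ := DJT.sigma p r l hl hlr with hσ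
  set τ := DJT.tau p r with hτ
  set A'' : Matrix (Fin p ⊕ Fin r) (Fin p ⊕ Fin r) A := AA.submatrix σ τ with hA''
  set B'' : Matrix (Fin p ⊕ Fin r) (Fin p ⊕ Fin r) A := BB.submatrix τ σ with hB''
  have hA''B'' : A'' * B'' = 1 := by
    rw [hA'', hB'', Matrix.submatrix_mul_equiv, hABone, Matrix.submatrix_one_equiv]
  -- blocks
  set P := A''.toBlocks₁₁ with hP
  set Q := A''.toBlocks₁₂ with hQ
  set R := A''.toBlocks₂₁ with hR
  set S := A''.toBlocks₂₂ with hS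
  set P' := B''.toBlocks₁₁ with hP'
  set Q' := B''.toBlocks₁₂ with hQ'
  set R' := B''.toBlocks₂₁ with hR'
  set S' := B''.toBlocks₂₂ with hS'
  have hAblocks : A'' = Matrix.fromBlocks P Q R S := (Matrix.fromBlocks_toBlocks A'').symm
  have hBblocks : B'' = Matrix.fromBlocks P' Q' R' S' := (Matrix.fromBlocks_toBlocks B'').symm
  have hprod : Matrix.fromBlocks (P * P' + Q * R') (P * Q' + Q * S')
      (R * P' + S * R') (R * Q' + S * S') =
      Matrix.fromBlocks (1 : Matrix (Fin p) (Fin p) A) 0 0 (1 : Matrix (Fin r) (Fin r) A) := by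
    rw [← Matrix.fromBlocks_multiply, ← hAblocks, ← hBblocks, hA''B'', Matrix.fromBlocks_one]
  have h12 : P * Q' + Q * S' = 0 := by
    have h := congrArg Matrix.toBlocks₁₂ hprod
    rw [Matrix.toBlocks_fromBlocks₁₂, Matrix.toBlocks_fromBlocks₁₂] at h
    exact h
  have h22 : R * Q' + S * S' = 1 := by
    have h := congrArg Matrix.toBlocks₂₂ hprod
    rw [Matrix.toBlocks_fromBlocks₂₂, Matrix.toBlocks_fromBlocks₂₂] at h
    exact h
  have hkey : A'' * Matrix.fromBlocks 1 Q' 0 S' = Matrix.fromBlocks P 0 R 1 := by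
    rw [hAblocks, Matrix.fromBlocks_multiply, h12, h22]
    simp
  have hdets : A''.det * S'.det = P.det := by
    have := congrArg Matrix.det hkey
    rw [Matrix.det_mul, Matrix.det_fromBlocks_zero₂₁, Matrix.det_fromBlocks_zero₁₂] at this
    simpa using this
  -- determinant of A'' via the sign
  have hA''perm : A'' = (AA.submatrix τ τ).submatrix (σ.trans τ.symm) id := by
    ext x y
    simp [hA'', Matrix.submatrix_apply, Equiv.trans_apply, Equiv.apply_symm_apply]
  have hsign : Equiv.Perm.sign (σ.trans τ.symm) = (-1) ^ (∑ i, l i) :=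
    DJT.sign_sigma p r (∑ i, l i) l hl hlr rfl
  have hdetA'' : A''.det = ((-1 : A)) ^ (∑ i, l i) := by
    rw [hA''perm, Matrix.det_permute, Matrix.det_submatrix_equiv_self, hdetAA, mul_one, hsign]
    push_cast
    rfl
  -- identify P with the LHS matrix
  have hPeq : P = Matrix.of fun i j : Fin p => a ((l i : ℤ) - (i : ℤ) + (j : ℤ)) := by
    ext i j
    have hi := i.isLt
    have hj := j.isLt
    have hσv : ((σ (Sum.inl i)) : ℕ) = l i + (p - 1 - i.val) := rfl
    have hτv : ((τ (Sum.inl j)) : ℕ) = 0 + (p - 1 - j.val) := rfl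
    simp only [hP, Matrix.toBlocks₁₁, hA'', Matrix.submatrix_apply, Matrix.of_apply, hAA]
    rw [show ((σ (Sum.inl i) : ℕ) : ℤ) - ((τ (Sum.inl j) : ℕ) : ℤ) =
      (l i : ℤ) - (i : ℤ) + (j : ℤ) by rw [hσv, hτv]; omega]
  -- identify S' with the transpose of the RHS matrix
  have hS'eq : S' = Matrix.transpose (Matrix.of fun i j : Fin r =>
      b (((Finset.univ.filter fun t : Fin p => (i : ℕ) < l t).card : ℤ)
          - (i : ℤ) + (j : ℤ))) := by
    ext i j
    have hi := i.isLt
    have hj := j.isLt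
    have hc := DJT.conj_le p l j.val
    have hτv : ((τ (Sum.inr i)) : ℕ) = p + i.val - DJT.conj p (fun _ => 0) i.val := rfl
    have hσv : ((σ (Sum.inr j)) : ℕ) = p + j.val - DJT.conj p l j.val := rfl
    simp only [hS', Matrix.toBlocks₂₂, hB'', Matrix.submatrix_apply, Matrix.of_apply, hBB,
      Matrix.transpose_apply]
    rw [show ((τ (Sum.inr i) : ℕ) : ℤ) - ((σ (Sum.inr j) : ℕ) : ℤ) =
      ((DJT.conj p l j.val : ℕ) : ℤ) - (j : ℤ) + (i : ℤ) by
        rw [hτv, hσv, DJT.conj_zero]; omega]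
    rfl
  rw [← hPeq, ← hdets, hdetA'', hS'eq, Matrix.det_transpose]
end

section
/- In the abstract ring U^±_{m,n} generated by u_1,u_2,..., v_1,v_2,..., t subject to the relations R_I(w) = 0 for all integer sequences I of length m+1 (where w_i = u_i - t·v_{-i-m+n}, u_0 = v_0 = 1, u_i = v_i = 0 for i < 0, and R_I(w) = det(w_{i_α + β - 1})_{1≤α,β≤m+1}), the element t is invertible. -/
noncomputable section

/-- The free polynomial ring on generators u_1, u_2, …, v_1, v_2, … and t. -/
abbrev FreeGen := MvPolynomial ((ℕ ⊕ ℕ) ⊕ Unit) ℤ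

/-- The generator u_i (with u_0 = 1 and u_i = 0 for i < 0). -/
def uGen (i : ℤ) : FreeGen :=
  if i ≤ 0 then (if i = 0 then 1 else 0)
  else MvPolynomial.X (Sum.inl (Sum.inl (i.toNat - 1)))

/-- The generator v_i (with v_0 = 1 and v_i = 0 for i < 0). -/
def vGen (i : ℤ) : FreeGen :=
  if i ≤ 0 then (if i = 0 then 1 else 0)
  else MvPolynomial.X (Sum.inl (Sum.inr (i.toNat - 1)))

/-- The generator t. -/
def tGen : FreeGen := MvPolynomial.X (Sum.inr ())

/-- w_i = u_i - t·v_{n-m-i}. -/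
def wGen (m n : ℕ) (i : ℤ) : FreeGen :=
  uGen i - tGen * vGen ((n : ℤ) - (m : ℤ) - i)

/-- The ideal of relations R_I(w) = det(w_{i_α+β-1}) = 0 for all I ∈ ℤ^{m+1}. -/
def relIdeal (m n : ℕ) : Ideal FreeGen :=
  Ideal.span {p | ∃ I : Fin (m + 1) → ℤ,
    p = (Matrix.of fun α β : Fin (m + 1) => wGen m n (I α + (β : ℤ))).det}

open MvPolynomial in
lemma X_dvd_sub_aeval {σ : Type*} [DecidableEq σ] (s : σ) (p : MvPolynomial σ ℤ) :
    X s ∣ p - aeval (Function.update X s 0) p := by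
  induction p using MvPolynomial.induction_on with
  | C a => simp
  | add p q hp hq =>
      have := dvd_add hp hq
      convert this using 1
      simp only [map_add]; ring
  | mul_X p i hp =>
      by_cases h : i = s
      · subst h
        simp only [map_mul, aeval_X, Function.update_self, mul_zero, sub_zero]
        exact Dvd.dvd.mul_left dvd_rfl p
      · simp only [map_mul, aeval_X, Function.update_of_ne h]
        have : p * X i - aeval (Function.update X s 0) p * X i
            = (p - aeval (Function.update X s 0) p) * X i := by ring
        rw [this]
        exact hp.mul_right _

open MvPolynomial

/-- in the ring U^±_{m,n} = FreeGen / relIdeal, presented by generators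
u_i, v_i, t and the relations R_I(w) = 0 for all integer sequences I of length m+1,
the element t is invertible. -/
theorem t_invertible_in_U (m n : ℕ) :
    IsUnit (Ideal.Quotient.mk (relIdeal m n) tGen) := by
  classical
  set I : Fin (m + 1) → ℤ := fun α => -(α : ℤ) with hI
  set M : Matrix (Fin (m + 1)) (Fin (m + 1)) FreeGen :=
    Matrix.of fun α β : Fin (m + 1) => wGen m n (I α + (β : ℤ)) with hM
  have hmem : M.det ∈ relIdeal m n := Ideal.subset_span ⟨I, rfl⟩
  -- the substitution t ↦ 0
  set φ : FreeGen →ₐ[ℤ] FreeGen := aeval (Function.update X (Sum.inr ()) 0) with hφ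
  have hφu : ∀ i : ℤ, φ (uGen i) = uGen i := by
    intro i
    unfold uGen
    split_ifs <;> simp [hφ, Function.update_of_ne]
  have hφt : φ tGen = 0 := by simp [hφ, tGen]
  have hφw : ∀ i : ℤ, φ (wGen m n i) = uGen i := by
    intro i
    simp [wGen, map_sub, map_mul, hφt, hφu]
  -- φ M.det = 1
  have hdet1 : φ M.det = 1 := by
    rw [AlgHom.map_det]
    have hMφ : φ.mapMatrix M = Matrix.of fun α β : Fin (m + 1) => uGen (I α + (β : ℤ)) := by
      ext α β
      simp [AlgHom.mapMatrix_apply, Matrix.map_apply, hM, hφw]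
    rw [hMφ]
    have htri : (Matrix.of fun α β : Fin (m + 1) =>
        uGen (I α + (β : ℤ))).BlockTriangular id := by
      intro α β h
      simp only [Matrix.of_apply]
      have : I α + (β : ℤ) < 0 := by
        simp only [hI]
        have : (β : ℤ) < (α : ℤ) := by exact_mod_cast h
        omega
      unfold uGen
      rw [if_pos (le_of_lt this), if_neg (by omega)]
    rw [Matrix.det_of_upperTriangular htri]
    have hdiag : ∀ α : Fin (m + 1), uGen (I α + (α : ℤ)) = 1 := by
      intro α
      unfold uGen
      rw [if_pos (by simp [hI]), if_pos (by simp [hI])]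
    simp only [Matrix.of_apply, hdiag]
    simp
  obtain ⟨g, hg⟩ := X_dvd_sub_aeval (Sum.inr ()) M.det
  -- M.det = 1 + tGen * g
  have key : M.det = 1 + tGen * g := by
    have : M.det - φ M.det = tGen * g := hg
    rw [hdet1] at this
    linear_combination this
  have h0 : Ideal.Quotient.mk (relIdeal m n) M.det = 0 :=
    (Ideal.Quotient.eq_zero_iff_mem).mpr hmem
  rw [key, map_add, map_mul, map_one] at h0
  refine IsUnit.of_mul_eq_one (-(Ideal.Quotient.mk (relIdeal m n) g)) ?_
  linear_combination -h0
end
end
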